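/- arXiv:1201.3174 — 4 statements merged into one kernel-verified Lean document; each statement's English description precedes it below -/
import Mathlib

section
/- Let C(Σ,I) be a right-angled Coxeter group and S_C = {a² → 1 | a ∈ Σ} the trace rewriting system on the trace monoid M(Σ,I). Then S_C is strongly confluent and length-reducing, and the set IRR(S_C) of irreducible traces (those without a factor a²) is a set of unique normal forms for C(Σ,I) of geodesic length. -/
/-- One commutation step: exchanging two adjacent independent letters. -/
def swapStep {S : Type*} (I : S → S → Prop) (u v : List S) : Prop :=
  ∃ (p s : List S) (a b : S), I a b ∧ u = p ++ a :: b :: s ∧ v = p ++ b :: a :: s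

/-- Trace equivalence: the equivalence relation on words generated by commutation steps. -/
def traceEq {S : Type*} (I : S → S → Prop) : List S → List S → Prop :=
  Relation.EqvGen (swapStep I)

/-- The setoid of trace equivalence. -/
def traceSetoid {S : Type*} (I : S → S → Prop) : Setoid (List S) :=
  Relation.EqvGen.setoid (swapStep I)

/-- The trace monoid `M(Σ, I)`: words over `Σ` up to commutation of independent letters. -/
def Trace {S : Type*} (I : S → S → Prop) : Type _ := Quotient (traceSetoid I)

/-- The trace represented by a word. -/
def mkT {S : Type*} (I : S → S → Prop) (w : List S) : Trace I :=
  Quotient.mk (traceSetoid I) w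

/-- The length of a trace (well defined since commutation preserves length). -/
def lenT {S : Type*} (I : S → S → Prop) : Trace I → ℕ :=
  Quotient.lift List.length (by
    intro u v h
    induction h with
    | rel x y hxy =>
        obtain ⟨p, s, a, b, -, hx, hy⟩ := hxy
        subst hx; subst hy; simp
    | refl x => rfl
    | symm x y _ ih => omega
    | trans x y z _ _ ih1 ih2 => omega)

/-- One step of the trace rewriting system `S_C = {a² → 1 | a ∈ Σ}`. -/
def RwC {S : Type*} (I : S → S → Prop) (x y : Trace I) : Prop :=
  ∃ (a : S) (u v : List S), x = mkT I (u ++ a :: a :: v) ∧ y = mkT I (u ++ v)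

/-- A trace is `S_C`-irreducible iff no rule applies (no factor `a²`). -/
def IrrC {S : Type*} (I : S → S → Prop) (x : Trace I) : Prop :=
  ∀ y, ¬ RwC I x y

/-- The defining relators of the right-angled Coxeter group `C(Σ, I)`. -/
def racRels {S : Type*} (I : S → S → Prop) : Set (FreeGroup S) :=
  {r | ∃ a : S, r = FreeGroup.of a * FreeGroup.of a} ∪
  {r | ∃ a b : S, I a b ∧
        r = FreeGroup.of a * FreeGroup.of b * (FreeGroup.of a)⁻¹ * (FreeGroup.of b)⁻¹}

/-- Evaluation of a word over `Σ` in the right-angled Coxeter group `C(Σ, I)`. -/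
def racEval {S : Type*} (I : S → S → Prop) (w : List S) : PresentedGroup (racRels I) :=
  (w.map (fun a => PresentedGroup.of (rels := racRels I) a)).prod

namespace RacAux

set_option linter.unusedSectionVars false

variable {S : Type*} [DecidableEq S] {I : S → S → Prop}

lemma mkT_sound {u v : List S} (h : Relation.EqvGen (swapStep I) u v) : mkT I u = mkT I v :=
  Quotient.sound (s := traceSetoid I) h

lemma mkT_exact {u v : List S} (h : mkT I u = mkT I v) : Relation.EqvGen (swapStep I) u v :=
  Quotient.exact h

lemma swapStep_context {u v : List S} (x y : List S) (h : swapStep I u v) :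
    swapStep I (x ++ u ++ y) (x ++ v ++ y) := by
  obtain ⟨p, s, a, b, hab, rfl, rfl⟩ := h
  exact ⟨x ++ p, s ++ y, a, b, hab, by simp, by simp⟩

lemma mkT_context {u v : List S} (x y : List S) (h : mkT I u = mkT I v) :
    mkT I (x ++ u ++ y) = mkT I (x ++ v ++ y) := by
  have h' := mkT_exact h
  clear h
  induction h' with
  | rel a b hab => exact mkT_sound (Relation.EqvGen.rel _ _ (swapStep_context x y hab))
  | refl => rfl
  | symm a b _ ih => exact ih.symm
  | trans a b c _ _ ih1 ih2 => exact ih1.trans ih2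

lemma mkT_append_congr {u u' v v' : List S} (h1 : mkT I u = mkT I u')
    (h2 : mkT I v = mkT I v') : mkT I (u ++ v) = mkT I (u' ++ v') := by
  have a1 : mkT I ([] ++ u ++ v) = mkT I ([] ++ u' ++ v) := mkT_context [] v h1
  have a2 : mkT I (u' ++ v ++ []) = mkT I (u' ++ v' ++ []) := mkT_context u' [] h2
  simpa using a1.trans (by simpa using a2)

lemma mkT_cons_congr (c : S) {u v : List S} (h : mkT I u = mkT I v) :
    mkT I (c :: u) = mkT I (c :: v) :=
  mkT_append_congr (u := [c]) (u' := [c]) rfl h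

lemma mem_of_mkT_eq {u v : List S} (h : mkT I u = mkT I v) : ∀ a, a ∈ u ↔ a ∈ v := by
  have h' := mkT_exact h
  clear h
  induction h' with
  | rel x y hxy =>
      obtain ⟨p, s, a, b, -, rfl, rfl⟩ := hxy
      intro c; simp; tauto
  | refl => intro a; rfl
  | symm x y _ ih => intro a; exact (ih a).symm
  | trans x y z _ _ ih1 ih2 => intro a; exact (ih1 a).trans (ih2 a)

lemma length_of_mkT_eq {u v : List S} (h : mkT I u = mkT I v) : u.length = v.length := by
  have h' := mkT_exact h
  clear h
  induction h' with
  | rel x y hxy => obtain ⟨p, s, a, b, -, rfl, rfl⟩ := hxy; simp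
  | refl => rfl
  | symm x y _ ih => omega
  | trans x y z _ _ ih1 ih2 => omega

/-- projection onto the letters `c`, `d`. -/
def proj (c d : S) (w : List S) : List S := w.filter (fun x => x = c ∨ x = d)

@[simp] lemma proj_nil (c d : S) : proj c d [] = [] := rfl

lemma proj_append (c d : S) (u v : List S) : proj c d (u ++ v) = proj c d u ++ proj c d v :=
  List.filter_append ..

lemma exists_first_occ {c : S} : ∀ {v : List S}, c ∈ v → ∃ p q, v = p ++ c :: q ∧ c ∉ p := by
  intro v hv
  induction v with
  | nil => simp at hv
  | cons x t ih =>
      by_cases hx : x = c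
      · exact ⟨[], t, by simp [hx], by simp⟩
      · have hct : c ∈ t := by
          rcases List.mem_cons.mp hv with h | h
          · exact absurd h.symm hx
          · exact h
        obtain ⟨p, q, rfl, hp⟩ := ih hct
        refine ⟨x :: p, q, rfl, ?_⟩
        simp only [List.mem_cons]
        rintro (rfl | hc)
        · exact hx rfl
        · exact hp hc

lemma move_letter {c : S} : ∀ {p : List S} (q : List S), (∀ d ∈ p, I d c) →
    mkT I (p ++ c :: q) = mkT I (c :: (p ++ q)) := by
  intro p
  induction p with
  | nil => intro q h; rfl
  | cons d t ih =>
      intro q h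
      have h1 : mkT I (t ++ c :: q) = mkT I (c :: (t ++ q)) :=
        ih q (fun x hx => h x (by simp [hx]))
      calc mkT I (d :: (t ++ c :: q)) = mkT I (d :: c :: (t ++ q)) := mkT_cons_congr d h1
        _ = mkT I (c :: d :: (t ++ q)) := mkT_sound
            (Relation.EqvGen.rel _ _ ⟨[], t ++ q, d, c, h d (by simp), rfl, rfl⟩)

variable (hirr : ∀ a : S, ¬ I a a) (hsym : ∀ a b : S, I a b → I b a)

include hirr hsym

lemma proj_eq_of_mkT_eq {c d : S} (hcd : ¬ I c d) {u v : List S}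
    (h : mkT I u = mkT I v) : proj c d u = proj c d v := by
  have h' := mkT_exact h; clear h
  induction h' with
  | rel x y hxy =>
      obtain ⟨p, s, a, b, hab, rfl, rfl⟩ := hxy
      simp only [proj, List.filter_append]
      congr 1
      by_cases ha : a = c ∨ a = d <;> by_cases hb : b = c ∨ b = d <;>
        simp [List.filter_cons, ha, hb]
      exfalso
      rcases ha with rfl | rfl <;> rcases hb with rfl | rfl
      · exact hirr _ hab
      · exact hcd hab
      · exact hcd (hsym _ _ hab)
      · exact hirr _ hab
  | refl => rfl
  | symm x y _ ih => exact ih.symm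
  | trans x y z _ _ ih1 ih2 => exact ih1.trans ih2

lemma split_of_proj {c : S} {w z : List S}
    (h : ∀ c' d', ¬ I c' d' → proj c' d' (c :: w) = proj c' d' z) :
    ∃ p q, z = p ++ c :: q ∧ (∀ d ∈ p, I d c) ∧
      (∀ c' d', ¬ I c' d' → proj c' d' w = proj c' d' (p ++ q)) := by
  have hcz : c ∈ z := by
    by_contra hc
    have hz : proj c c z = [] := by
      refine List.filter_eq_nil_iff.mpr ?_
      intro x hx
      simp only [decide_eq_true_eq, not_or]
      constructor <;> rintro rfl <;> exact hc hx
    have := h c c (hirr c)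
    rw [hz] at this
    simp [proj] at this
  obtain ⟨p, q, rfl, hcp⟩ := exists_first_occ hcz
  have hdp : ∀ d ∈ p, I d c := by
    intro d hd
    by_contra hdc
    have hcd : ¬ I c d := fun h' => hdc (hsym _ _ h')
    have hproj := h c d hcd
    have hcw : proj c d (c :: w) = c :: proj c d w := by simp [proj]
    have hcq : proj c d (c :: q) = c :: proj c d q := by simp [proj]
    rw [hcw, proj_append, hcq] at hproj
    have hdp' : d ∈ proj c d p := List.mem_filter.mpr ⟨hd, by simp⟩
    cases hpp : proj c d p with
    | nil => rw [hpp] at hdp'; simp at hdp'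
    | cons e r =>
        rw [hpp] at hproj
        have he : c = e := by
          have : c :: proj c d w = e :: (r ++ c :: proj c d q) := hproj
          exact (List.cons.injEq _ _ _ _ ▸ this).1
        have hep : e ∈ p := (List.mem_filter.mp (hpp ▸ (List.mem_cons_self : e ∈ e :: r))).1
        exact hcp (he ▸ hep)
  refine ⟨p, q, rfl, hdp, ?_⟩
  intro c' d' hcd'
  have hproj := h c' d' hcd'
  rw [proj_append] at hproj
  by_cases hc : c = c' ∨ c = d'
  · have hpnil : proj c' d' p = [] := by
      refine List.filter_eq_nil_iff.mpr ?_
      intro d hd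
      have hIdc : I d c := hdp d hd
      have hIcd : I c d := hsym _ _ hIdc
      simp only [decide_eq_true_eq, not_or]
      constructor <;> rintro rfl
      · rcases hc with rfl | rfl
        · exact hirr _ hIdc
        · exact hcd' hIdc
      · rcases hc with rfl | rfl
        · exact hcd' hIcd
        · exact hirr _ hIdc
    have hcw : proj c' d' (c :: w) = c :: proj c' d' w := by simp [proj, hc]
    have hcq : proj c' d' (c :: q) = c :: proj c' d' q := by simp [proj, hc]
    rw [hcw, hcq, hpnil] at hproj
    have : proj c' d' w = proj c' d' q := by
      simpa using hproj
    rw [proj_append, hpnil, this]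
    simp
  · push_neg at hc
    have hcw : proj c' d' (c :: w) = proj c' d' w := by simp [proj, hc.1, hc.2]
    have hcq : proj c' d' (c :: q) = proj c' d' q := by simp [proj, hc.1, hc.2]
    rw [hcw, hcq] at hproj
    rw [proj_append]
    exact hproj

lemma mkT_eq_of_proj : ∀ (u v : List S),
    (∀ c d, ¬ I c d → proj c d u = proj c d v) → mkT I u = mkT I v := by
  intro u
  induction u with
  | nil =>
      intro v h
      cases v with
      | nil => rfl
      | cons x t =>
          exfalso
          have := h x x (hirr x)
          simp [proj] at this
  | cons c w ih =>
      intro v h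
      obtain ⟨p, q, rfl, hdp, hproj⟩ := split_of_proj hirr hsym h
      calc mkT I (c :: w) = mkT I (c :: (p ++ q)) := mkT_cons_congr c (ih _ hproj)
        _ = mkT I (p ++ c :: q) := (move_letter q hdp).symm

lemma first_letter {c : S} {w z : List S} (h : mkT I (c :: w) = mkT I z) :
    ∃ p q, z = p ++ c :: q ∧ (∀ d ∈ p, I d c) ∧ mkT I w = mkT I (p ++ q) := by
  obtain ⟨p, q, rfl, hdp, hproj⟩ :=
    split_of_proj hirr hsym (fun c' d' h' => proj_eq_of_mkT_eq hirr hsym h' h)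
  exact ⟨p, q, rfl, hdp, mkT_eq_of_proj hirr hsym _ _ hproj⟩

lemma cancel_cons {c : S} {u v : List S} (h : mkT I (c :: u) = mkT I (c :: v)) :
    mkT I u = mkT I v := by
  apply mkT_eq_of_proj hirr hsym
  intro c' d' hcd
  have hp := proj_eq_of_mkT_eq hirr hsym hcd h
  by_cases hc : c = c' ∨ c = d'
  · have h1 : proj c' d' (c :: u) = c :: proj c' d' u := by simp [proj, hc]
    have h2 : proj c' d' (c :: v) = c :: proj c' d' v := by simp [proj, hc]
    rw [h1, h2] at hp
    simpa using hp
  · push_neg at hc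
    have h1 : proj c' d' (c :: u) = proj c' d' u := by simp [proj, hc.1, hc.2]
    have h2 : proj c' d' (c :: v) = proj c' d' v := by simp [proj, hc.1, hc.2]
    rw [h1, h2] at hp
    exact hp

lemma cancel_left : ∀ (x : List S) {u v : List S},
    mkT I (x ++ u) = mkT I (x ++ v) → mkT I u = mkT I v := by
  intro x
  induction x with
  | nil => intro u v h; exact h
  | cons c t ih => intro u v h; exact ih (cancel_cons hirr hsym h)

def Indep (I : S → S → Prop) (u v : List S) : Prop := ∀ x ∈ u, ∀ y ∈ v, I x y

omit hirr hsym in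
lemma indep_nil_left (v : List S) : Indep I [] v := by intro x hx; simp at hx

omit hirr hsym in
lemma mkT_comm {β : List S} : ∀ {γ : List S}, Indep I β γ →
    mkT I (β ++ γ) = mkT I (γ ++ β) := by
  intro γ
  induction γ generalizing β with
  | nil => intro _; simp
  | cons c γ' ih =>
      intro h
      have h1 : ∀ d ∈ β, I d c := fun d hd => h d hd c (by simp)
      calc mkT I (β ++ c :: γ') = mkT I (c :: (β ++ γ')) := move_letter _ h1
        _ = mkT I (c :: (γ' ++ β)) := mkT_cons_congr c (ih (fun x hx y hy => h x hx y (by simp [hy])))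

omit hirr hsym in
lemma mkT_comm_mid {β γ : List S} (x y : List S) (h : Indep I β γ) :
    mkT I (x ++ (β ++ (γ ++ y))) = mkT I (x ++ (γ ++ (β ++ y))) := by
  apply mkT_append_congr rfl
  rw [← List.append_assoc, ← List.append_assoc]
  exact mkT_append_congr (mkT_comm h) rfl

omit hirr hsym in
lemma rigid_nil {w : List S} (h : mkT I w = mkT I ([] : List S)) : w = [] := by
  have := length_of_mkT_eq h; simpa using List.length_eq_zero_iff.mp (by simpa using this)

omit hirr hsym in
lemma rigid_one {a : S} {w : List S} (h : mkT I w = mkT I [a]) : w = [a] := by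
  have hl : w.length = 1 := by simpa using length_of_mkT_eq h
  obtain ⟨x, rfl⟩ := List.length_eq_one_iff.mp hl
  have := (mem_of_mkT_eq h a).mpr (by simp)
  simp at this
  simp [this]

lemma rigid_sq {a : S} {w : List S} (h : mkT I w = mkT I [a, a]) : w = [a, a] := by
  have hl : w.length = 2 := by simpa using length_of_mkT_eq h
  have hp := proj_eq_of_mkT_eq hirr hsym (hirr a) h
  match w, hl, hp with
  | [x, y], _, hp => by_cases hx : x = a <;> by_cases hy : y = a <;>
      simp [proj, hx, hy] at hp <;> simp [hx, hy]

lemma levi : ∀ (x y z t : List S), mkT I (x ++ y) = mkT I (z ++ t) →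
    ∃ p q r s, mkT I x = mkT I (p ++ q) ∧ mkT I y = mkT I (r ++ s) ∧
      mkT I z = mkT I (p ++ r) ∧ mkT I t = mkT I (q ++ s) ∧ Indep I q r := by
  intro x
  induction x with
  | nil =>
      intro y z t h
      exact ⟨[], [], z, t, rfl, h, rfl, rfl, indep_nil_left _⟩
  | cons c x₀ ih =>
      intro y z t h
      obtain ⟨P, Q, hsplit, hPind, hPQ⟩ := first_letter hirr hsym h
      have hcase : (∃ w1, P = z ++ w1 ∧ t = w1 ++ c :: Q) ∨
          (∃ w1, z = P ++ c :: w1 ∧ Q = w1 ++ t) := by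
        rcases List.append_eq_append_iff.mp hsplit with ⟨w1, hP, ht⟩ | ⟨w1, hz, hQ⟩
        · exact Or.inl ⟨w1, hP, ht⟩
        · cases w1 with
          | nil =>
              refine Or.inl ⟨[], by simpa using hz.symm, ?_⟩
              simpa using hQ.symm
          | cons e w' =>
              have he : c = e ∧ Q = w' ++ t := by
                have : c :: Q = e :: (w' ++ t) := hQ
                simpa using this
              exact Or.inr ⟨w', by rw [hz, he.1], he.2⟩
      rcases hcase with ⟨w1, rfl, rfl⟩ | ⟨w1, rfl, rfl⟩
      · -- the letter c sits inside t
        have hPQ' : mkT I (x₀ ++ y) = mkT I (z ++ (w1 ++ Q)) := by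
          simpa [List.append_assoc] using hPQ
        obtain ⟨p, q, r, s, hx, hy, hz', ht', hqr⟩ := ih y z (w1 ++ Q) hPQ'
        have hmem : ∀ d, d ∈ p ++ r → d ∈ z := fun d hd => (mem_of_mkT_eq hz' d).mpr hd
        have hIc : ∀ d ∈ z, I d c := fun d hd => hPind d (by simp [hd])
        refine ⟨p, c :: q, r, s, ?_, hy, hz', ?_, ?_⟩
        · calc mkT I (c :: x₀) = mkT I (c :: (p ++ q)) := mkT_cons_congr c hx
            _ = mkT I (p ++ c :: q) :=
              (move_letter _ (fun d hd => hIc d (hmem d (by simp [hd])))).symm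
        · calc mkT I (w1 ++ c :: Q) = mkT I (c :: (w1 ++ Q)) :=
              move_letter _ (fun d hd => hPind d (by simp [hd]))
            _ = mkT I (c :: (q ++ s)) := mkT_cons_congr c ht'
        · intro a ha b hb
          rcases List.mem_cons.mp ha with rfl | ha'
          · exact hsym _ _ (hIc b (hmem b (by simp [hb])))
          · exact hqr a ha' b hb
      · -- the letter c sits inside z
        have hPQ' : mkT I (x₀ ++ y) = mkT I ((P ++ w1) ++ t) := by
          simpa [List.append_assoc] using hPQ
        obtain ⟨p, q, r, s, hx, hy, hz', ht', hqr⟩ := ih y (P ++ w1) t hPQ'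
        refine ⟨c :: p, q, r, s, mkT_cons_congr c hx, hy, ?_, ht', hqr⟩
        calc mkT I (P ++ c :: w1) = mkT I (c :: (P ++ w1)) :=
            move_letter _ (fun d hd => hPind d hd)
          _ = mkT I (c :: (p ++ r)) := mkT_cons_congr c hz'

omit hirr hsym in
lemma listeq {w₁ w₂ : List S} (h : w₁ = w₂) : mkT I w₁ = mkT I w₂ := congrArg _ h

omit hirr hsym in
lemma indep_of_mem {q r β γ : List S} (H : Indep I q r) (f : ∀ x ∈ β, x ∈ q)
    (g : ∀ y ∈ γ, y ∈ r) : Indep I β γ := fun x hx y hy => H x (f x hx) y (g y hy)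

omit hirr hsym in
lemma memsub {q w : List S} (h : mkT I q = mkT I w) : ∀ x ∈ w, x ∈ q :=
  fun x hx => (mem_of_mkT_eq h x).mpr hx

omit hirr in
lemma indep_single_of {a : S} {l : List S} (h : ∀ y ∈ l, I y a) : Indep I [a] l := by
  intro x hx y hy
  simp at hx; subst hx
  exact hsym _ _ (h y hy)

omit hirr in
lemma indep_symm {u v : List S} (h : Indep I u v) : Indep I v u :=
  fun x hx y hy => hsym _ _ (h y hy x hx)

omit hirr hsym in
lemma comm3 {β γ : List S} (y : List S) (h : Indep I β γ) :
    mkT I (β ++ (γ ++ y)) = mkT I (γ ++ (β ++ y)) := mkT_comm_mid [] y h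

omit hirr hsym in
lemma rw_step {T W : Trace I} {x y : List S} {c : S} (hT : T = mkT I (x ++ c :: c :: y))
    (hW : W = mkT I (x ++ y)) : RwC I T W := ⟨c, x, y, hT, hW⟩

omit hirr hsym in
lemma snoc_eq_pair {κ : List S} {x c : S} (h : κ ++ [x] = [c, c]) : κ = [c] ∧ x = c := by
  have hl : κ.length = 1 := by have := congrArg List.length h; simp at this; omega
  obtain ⟨k, rfl⟩ := List.length_eq_one_iff.mp hl
  simp at h
  exact ⟨by simp [h.1], h.2⟩

omit hirr hsym in
lemma snoc_eq_single {κ : List S} {x c : S} (h : κ ++ [x] = [c]) : κ = [] ∧ x = c := by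
  cases κ with
  | nil => simpa using h
  | cons k t =>
      exfalso
      have := congrArg List.length h
      simp at this

lemma strong_conf {u v u' v' : List S} {a b : S}
    (h : mkT I (u ++ a :: a :: v) = mkT I (u' ++ b :: b :: v')) :
    mkT I (u ++ v) = mkT I (u' ++ v') ∨
      ∃ w, RwC I (mkT I (u ++ v)) w ∧ RwC I (mkT I (u' ++ v')) w := by
  have E : ∀ {w₁ w₂ w₃ w₄ : List S}, mkT I w₁ = mkT I w₂ → mkT I w₃ = mkT I w₄ →
      mkT I (w₁ ++ w₃) = mkT I (w₂ ++ w₄) := fun h1 h2 => mkT_append_congr h1 h2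
  have h1 : mkT I ((u ++ [a, a]) ++ v) = mkT I (u' ++ ([b, b] ++ v')) := by
    simpa [List.append_assoc] using h
  obtain ⟨p, q, r, s, Hu, Hv, Hu', Hbv, Hqr⟩ := levi hirr hsym _ _ _ _ h1
  obtain ⟨α, β, γ, δ, Hu2, Haa, Hp, Hq, Hβγ⟩ := levi hirr hsym _ _ _ _ Hu
  obtain ⟨μ, ν, ρ, σ, Hbb, Hv', Hq2, Hs, Hνρ⟩ := levi hirr hsym _ _ _ _ Hbv
  have hgd : γ ++ δ = [a, a] := rigid_sq hirr hsym Haa.symm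
  have hmn : μ ++ ν = [b, b] := rigid_sq hirr hsym Hbb.symm
  rcases γ with _ | ⟨x1, _ | ⟨x2, γ₂⟩⟩
  · -- G2 : γ = [], δ = [a,a]
    simp only [List.nil_append] at hgd
    subst hgd
    have Hp' : mkT I p = mkT I α := by simpa using Hp
    have mβq : ∀ x ∈ β, x ∈ q := fun x hx => memsub Hq x (by simp [hx])
    have haq : a ∈ q := memsub Hq a (by simp)
    have hβr : Indep I β r := indep_of_mem Hqr mβq (fun y hy => hy)
    rcases μ with _ | ⟨y1, _ | ⟨y2, μ₂⟩⟩
    · -- M2 : μ = [], ν = [b,b]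
      simp only [List.nil_append] at hmn
      subst hmn
      have Hq2' : mkT I q = mkT I ρ := by simpa using Hq2
      refine Or.inr ⟨mkT I ((α ++ (r ++ β)) ++ σ), ?_, ?_⟩
      · refine rw_step (c := b) (x := u ++ r) (y := σ) ?_ ?_
        · calc mkT I (u ++ v) = mkT I (u ++ (r ++ s)) := E rfl Hv
            _ = mkT I (u ++ (r ++ ([b, b] ++ σ))) := E rfl (E rfl Hs)
            _ = mkT I ((u ++ r) ++ (b :: b :: σ)) := listeq (by simp)
        · calc mkT I ((α ++ (r ++ β)) ++ σ) = mkT I (α ++ (r ++ (β ++ σ))) := listeq (by simp)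
            _ = mkT I (α ++ (β ++ (r ++ σ))) := E rfl (comm3 _ (indep_symm hsym hβr))
            _ = mkT I ((α ++ β) ++ (r ++ σ)) := listeq (by simp)
            _ = mkT I (u ++ (r ++ σ)) := E Hu2.symm rfl
            _ = mkT I ((u ++ r) ++ σ) := listeq (by simp)
      · refine rw_step (c := a) (x := α ++ (r ++ β)) (y := σ) ?_ rfl
        calc mkT I (u' ++ v') = mkT I ((p ++ r) ++ (ρ ++ σ)) := E Hu' Hv'
          _ = mkT I (p ++ (r ++ (ρ ++ σ))) := listeq (by simp)
          _ = mkT I (α ++ (r ++ (ρ ++ σ))) := E Hp' rfl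
          _ = mkT I (α ++ (r ++ ((β ++ [a, a]) ++ σ))) :=
              E rfl (E rfl (E (Hq2'.symm.trans Hq) rfl))
          _ = mkT I ((α ++ (r ++ β)) ++ (a :: a :: σ)) := listeq (by simp)
    · -- M1 : μ = [b,b] (after analysis) or μ = [y1]
      -- here μ = [y1], so ν = [b] and y1 = b : M3 case
      obtain ⟨rfl, rfl⟩ : b = y1 ∧ ν = [b] := by
        have h' : y1 :: ν = [b, b] := by simpa using hmn
        simp at h'
        exact ⟨h'.1.symm, h'.2⟩
      -- M3 : μ = [b], ν = [b]
      have hq3 : mkT I (β ++ [a, a]) = mkT I ([b] ++ ρ) := Hq.symm.trans Hq2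
      obtain ⟨κ, lam, τ, θ, Hβ2, Haa2, Hb2, Hρ, Hlt⟩ := levi hirr hsym _ _ _ _ hq3
      have htt : τ ++ θ = [a, a] := rigid_sq hirr hsym Haa2.symm
      rcases τ with _ | ⟨z1, _ | ⟨z2, τ₂⟩⟩
      · -- T2 : τ = [], θ = [a,a]
        simp only [List.nil_append] at htt
        subst htt
        have hk : κ = [b] := by simpa using rigid_one (I := I) (by simpa using Hb2.symm)
        subst hk
        have mlro : ∀ x ∈ lam, x ∈ ρ := fun x hx => memsub Hρ x (by simp [hx])
        have mlq : ∀ x ∈ lam, x ∈ q := fun x hx => memsub Hq2 x (by simp [mlro x hx])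
        have hlr : Indep I lam r := indep_of_mem Hqr mlq (fun y hy => hy)
        have hbq : b ∈ q := memsub Hq2 b (by simp)
        have hIbl : Indep I [b] lam := indep_of_mem Hνρ (fun x hx => hx) mlro
        have hIbr : Indep I [b] r :=
          indep_of_mem Hqr (fun x hx => by simp at hx; subst hx; exact hbq) (fun y hy => hy)
        refine Or.inr ⟨mkT I ((α ++ (lam ++ r)) ++ σ), ?_, ?_⟩
        · refine rw_step (c := b) (x := α ++ (lam ++ r)) (y := σ) ?_ rfl
          calc mkT I (u ++ v) = mkT I ((α ++ β) ++ (r ++ s)) := E Hu2 Hv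
            _ = mkT I (α ++ (β ++ (r ++ s))) := listeq (by simp)
            _ = mkT I (α ++ (([b] ++ lam) ++ (r ++ ([b] ++ σ)))) := E rfl (E Hβ2 (E rfl Hs))
            _ = mkT I (α ++ ([b] ++ (lam ++ (r ++ ([b] ++ σ))))) := listeq (by simp)
            _ = mkT I (α ++ (lam ++ ([b] ++ (r ++ ([b] ++ σ))))) := E rfl (comm3 _ hIbl)
            _ = mkT I (α ++ (lam ++ (r ++ ([b] ++ ([b] ++ σ))))) := E rfl (E rfl (comm3 _ hIbr))
            _ = mkT I ((α ++ (lam ++ r)) ++ (b :: b :: σ)) := listeq (by simp)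
        · refine rw_step (c := a) (x := α ++ (r ++ lam)) (y := σ) ?_ ?_
          · calc mkT I (u' ++ v') = mkT I ((p ++ r) ++ (ρ ++ σ)) := E Hu' Hv'
              _ = mkT I (p ++ (r ++ (ρ ++ σ))) := listeq (by simp)
              _ = mkT I (α ++ (r ++ (ρ ++ σ))) := E Hp' rfl
              _ = mkT I (α ++ (r ++ ((lam ++ [a, a]) ++ σ))) := E rfl (E rfl (E Hρ rfl))
              _ = mkT I ((α ++ (r ++ lam)) ++ (a :: a :: σ)) := listeq (by simp)
          · calc mkT I ((α ++ (lam ++ r)) ++ σ)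
                = mkT I (α ++ (lam ++ (r ++ σ))) := listeq (by simp)
              _ = mkT I (α ++ (r ++ (lam ++ σ))) := E rfl (comm3 _ hlr)
              _ = mkT I ((α ++ (r ++ lam)) ++ σ) := listeq (by simp)
      · -- T3 : τ = [z1], θ = [a], z1 = a
        obtain ⟨rfl, rfl⟩ : a = z1 ∧ θ = [a] := by
          have h' : z1 :: θ = [a, a] := by simpa using htt
          simp at h'
          exact ⟨h'.1.symm, h'.2⟩
        have hk : κ = [] ∧ a = b := snoc_eq_single (by simpa using rigid_one (I := I) (by simpa using Hb2.symm))
        obtain ⟨rfl, rfl⟩ := hk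
        have Hβ2' : mkT I β = mkT I lam := by simpa using Hβ2
        have hlr : Indep I lam r :=
          indep_of_mem Hqr (fun x hx => mβq x (memsub Hβ2' x hx)) (fun y hy => hy)
        refine Or.inl ?_
        have hy : mkT I (u ++ v) = mkT I (α ++ (lam ++ (r ++ ([a] ++ σ)))) := by
          calc mkT I (u ++ v) = mkT I ((α ++ β) ++ (r ++ s)) := E Hu2 Hv
            _ = mkT I (α ++ (β ++ (r ++ s))) := listeq (by simp)
            _ = mkT I (α ++ (lam ++ (r ++ ([a] ++ σ)))) := E rfl (E Hβ2' (E rfl Hs))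
        have hz : mkT I (u' ++ v') = mkT I (α ++ (lam ++ (r ++ ([a] ++ σ)))) := by
          calc mkT I (u' ++ v') = mkT I ((p ++ r) ++ (ρ ++ σ)) := E Hu' Hv'
            _ = mkT I (p ++ (r ++ (ρ ++ σ))) := listeq (by simp)
            _ = mkT I (α ++ (r ++ (ρ ++ σ))) := E Hp' rfl
            _ = mkT I (α ++ (r ++ ((lam ++ [a]) ++ σ))) := E rfl (E rfl (E Hρ rfl))
            _ = mkT I (α ++ (r ++ (lam ++ ([a] ++ σ)))) := listeq (by simp)
            _ = mkT I (α ++ (lam ++ (r ++ ([a] ++ σ)))) := E rfl (comm3 _ (indep_symm hsym hlr))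
        exact hy.trans hz.symm
      · -- T1 : τ = z1 :: z2 :: τ₂ : impossible since [b] too short
        exfalso
        have h1 : z1 :: z2 :: (τ₂ ++ θ) = [a, a] := by simpa using htt
        have h2 := congrArg List.length h1; simp at h2
        obtain ⟨rfl, rfl⟩ := h2
        obtain ⟨rfl, rfl⟩ : a = z1 ∧ a = z2 := by
          simp at h1
          exact ⟨h1.1.symm, h1.2.symm⟩
        have : κ ++ [a, a] = [b] := rigid_one (I := I) (by simpa using Hb2.symm)
        have := congrArg List.length this; simp at this
    · -- μ = y1 :: y2 :: μ₂ : M1 : μ = [b,b], ν = []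
      obtain ⟨rfl, rfl, rfl, rfl⟩ : b = y1 ∧ b = y2 ∧ μ₂ = [] ∧ ν = [] := by
        have h1 : y1 :: y2 :: (μ₂ ++ ν) = [b, b] := by simpa using hmn
        have h2 := congrArg List.length h1; simp at h2
        obtain ⟨rfl, rfl⟩ := h2
        simp at h1
        exact ⟨h1.1.symm, h1.2.symm, rfl, rfl⟩
      have Hs' : mkT I s = mkT I σ := by simpa using Hs
      have hq3 : mkT I (β ++ [a, a]) = mkT I ([b, b] ++ ρ) := Hq.symm.trans (by simpa using Hq2)
      obtain ⟨κ, lam, τ, θ, Hβ2, Haa2, Hbb2, Hρ, Hlt⟩ := levi hirr hsym _ _ _ _ hq3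
      have htt : τ ++ θ = [a, a] := rigid_sq hirr hsym Haa2.symm
      rcases τ with _ | ⟨z1, _ | ⟨z2, τ₂⟩⟩
      · -- T2 : τ = [], θ = [a,a] ; κ = [b,b]
        simp only [List.nil_append] at htt
        subst htt
        have hk : κ = [b, b] := by simpa using rigid_sq hirr hsym (by simpa using Hbb2.symm)
        subst hk
        have mlq : ∀ x ∈ lam, x ∈ q := fun x hx => mβq x (memsub Hβ2 x (by simp [hx]))
        have hlr : Indep I lam r := indep_of_mem Hqr mlq (fun y hy => hy)
        refine Or.inr ⟨mkT I (α ++ (lam ++ (r ++ σ))), ?_, ?_⟩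
        · refine rw_step (c := b) (x := α) (y := lam ++ (r ++ σ)) ?_ rfl
          calc mkT I (u ++ v) = mkT I ((α ++ β) ++ (r ++ s)) := E Hu2 Hv
            _ = mkT I (α ++ (β ++ (r ++ s))) := listeq (by simp)
            _ = mkT I (α ++ (([b, b] ++ lam) ++ (r ++ σ))) := E rfl (E Hβ2 (E rfl Hs'))
            _ = mkT I (α ++ (b :: b :: (lam ++ (r ++ σ)))) := listeq (by simp)
        · refine rw_step (c := a) (x := α ++ (r ++ lam)) (y := σ) ?_ ?_
          · calc mkT I (u' ++ v') = mkT I ((p ++ r) ++ (ρ ++ σ)) := E Hu' Hv'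
              _ = mkT I (p ++ (r ++ (ρ ++ σ))) := listeq (by simp)
              _ = mkT I (α ++ (r ++ (ρ ++ σ))) := E Hp' rfl
              _ = mkT I (α ++ (r ++ ((lam ++ [a, a]) ++ σ))) := E rfl (E rfl (E Hρ rfl))
              _ = mkT I ((α ++ (r ++ lam)) ++ (a :: a :: σ)) := listeq (by simp)
          · calc mkT I (α ++ (lam ++ (r ++ σ)))
                = mkT I (α ++ (r ++ (lam ++ σ))) := E rfl (comm3 _ hlr)
              _ = mkT I ((α ++ (r ++ lam)) ++ σ) := listeq (by simp)
      · -- T3 : τ = [z1] = [a], θ = [a] ; κ ++ [a] = [b,b] so κ = [b], a = b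
        obtain ⟨rfl, rfl⟩ : a = z1 ∧ θ = [a] := by
          have h' : z1 :: θ = [a, a] := by simpa using htt
          simp at h'
          exact ⟨h'.1.symm, h'.2⟩
        have hk : κ = [b] ∧ a = b := snoc_eq_pair (by simpa using rigid_sq hirr hsym (by simpa using Hbb2.symm))
        obtain ⟨rfl, rfl⟩ := hk
        -- now a = b ; β ≈ [a] ++ lam, ρ ≈ lam ++ [a], Indep lam [a]
        have mlq : ∀ x ∈ lam, x ∈ q := fun x hx => mβq x (memsub Hβ2 x (by simp [hx]))
        have hlr : Indep I lam r := indep_of_mem Hqr mlq (fun y hy => hy)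
        have hIal : Indep I [a] lam := indep_single_of hsym (fun y hy => Hlt y hy a (by simp))
        have hIar : Indep I [a] r :=
          indep_of_mem Hqr (fun x hx => by simp at hx; subst hx; exact haq) (fun y hy => hy)
        refine Or.inl ?_
        have hy : mkT I (u ++ v) = mkT I (α ++ (lam ++ (r ++ ([a] ++ σ)))) := by
          calc mkT I (u ++ v) = mkT I ((α ++ β) ++ (r ++ s)) := E Hu2 Hv
            _ = mkT I (α ++ (β ++ (r ++ s))) := listeq (by simp)
            _ = mkT I (α ++ (([a] ++ lam) ++ (r ++ σ))) := E rfl (E Hβ2 (E rfl Hs'))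
            _ = mkT I (α ++ ([a] ++ (lam ++ (r ++ σ)))) := listeq (by simp)
            _ = mkT I (α ++ (lam ++ ([a] ++ (r ++ σ)))) := E rfl (comm3 _ hIal)
            _ = mkT I (α ++ (lam ++ (r ++ ([a] ++ σ)))) := E rfl (E rfl (comm3 _ hIar))
        have hz : mkT I (u' ++ v') = mkT I (α ++ (lam ++ (r ++ ([a] ++ σ)))) := by
          calc mkT I (u' ++ v') = mkT I ((p ++ r) ++ (ρ ++ σ)) := E Hu' Hv'
            _ = mkT I (p ++ (r ++ (ρ ++ σ))) := listeq (by simp)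
            _ = mkT I (α ++ (r ++ (ρ ++ σ))) := E Hp' rfl
            _ = mkT I (α ++ (r ++ ((lam ++ [a]) ++ σ))) := E rfl (E rfl (E Hρ rfl))
            _ = mkT I (α ++ (r ++ (lam ++ ([a] ++ σ)))) := listeq (by simp)
            _ = mkT I (α ++ (lam ++ (r ++ ([a] ++ σ)))) := E rfl (comm3 _ (indep_symm hsym hlr))
        exact hy.trans hz.symm
      · -- T1 : τ = [a,a] ; κ ++ [a,a] = [b,b] so κ = [], a = b : reducts equal
        obtain ⟨rfl, rfl, rfl, rfl⟩ : a = z1 ∧ a = z2 ∧ τ₂ = [] ∧ θ = [] := by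
          have h1 : z1 :: z2 :: (τ₂ ++ θ) = [a, a] := by simpa using htt
          have h2 := congrArg List.length h1; simp at h2
          obtain ⟨rfl, rfl⟩ := h2
          simp at h1
          exact ⟨h1.1.symm, h1.2.symm, rfl, rfl⟩
        have hk : κ = [] ∧ a = b := by
          have h1 : κ ++ [a, a] = [b, b] := rigid_sq hirr hsym (by simpa using Hbb2.symm)
          have h2 := congrArg List.length h1; simp at h2
          subst h2
          simpa using h1
        obtain ⟨rfl, rfl⟩ := hk
        have Hβ2' : mkT I β = mkT I lam := by simpa using Hβ2
        have Hρ' : mkT I ρ = mkT I lam := by simpa using Hρ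
        have hlr : Indep I lam r :=
          indep_of_mem Hqr (fun x hx => mβq x (memsub Hβ2' x hx)) (fun y hy => hy)
        refine Or.inl ?_
        have hy : mkT I (u ++ v) = mkT I (α ++ (r ++ (lam ++ σ))) := by
          calc mkT I (u ++ v) = mkT I ((α ++ β) ++ (r ++ s)) := E Hu2 Hv
            _ = mkT I (α ++ (β ++ (r ++ s))) := listeq (by simp)
            _ = mkT I (α ++ (lam ++ (r ++ σ))) := E rfl (E Hβ2' (E rfl Hs'))
            _ = mkT I (α ++ (r ++ (lam ++ σ))) := E rfl (comm3 _ hlr)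
        have hz : mkT I (u' ++ v') = mkT I (α ++ (r ++ (lam ++ σ))) := by
          calc mkT I (u' ++ v') = mkT I ((p ++ r) ++ (ρ ++ σ)) := E Hu' Hv'
            _ = mkT I (p ++ (r ++ (ρ ++ σ))) := listeq (by simp)
            _ = mkT I (α ++ (r ++ (ρ ++ σ))) := E Hp' rfl
            _ = mkT I (α ++ (r ++ (lam ++ σ))) := E rfl (E rfl (E Hρ' rfl))
        exact hy.trans hz.symm
  · -- G3 : γ = [x1] = [a], δ = [a]
    obtain ⟨rfl, rfl⟩ : a = x1 ∧ δ = [a] := by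
      have h' : x1 :: δ = [a, a] := by simpa using hgd
      simp at h'
      exact ⟨h'.1.symm, h'.2⟩
    have mβq : ∀ x ∈ β, x ∈ q := fun x hx => memsub Hq x (by simp [hx])
    have haq : a ∈ q := memsub Hq a (by simp)
    have hβr : Indep I β r := indep_of_mem Hqr mβq (fun y hy => hy)
    have hIar : Indep I [a] r :=
      indep_of_mem Hqr (fun x hx => by simp at hx; subst hx; exact haq) (fun y hy => hy)
    have hIaβ : Indep I [a] β := indep_single_of hsym (fun y hy => Hβγ y hy a (by simp))
    rcases μ with _ | ⟨y1, _ | ⟨y2, μ₂⟩⟩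
    · -- M2 : μ = [], ν = [b,b]
      simp only [List.nil_append] at hmn
      subst hmn
      have Hq2' : mkT I q = mkT I ρ := by simpa using Hq2
      refine Or.inr ⟨mkT I ((α ++ (r ++ β)) ++ σ), ?_, ?_⟩
      · refine rw_step (c := b) (x := u ++ r) (y := σ) ?_ ?_
        · calc mkT I (u ++ v) = mkT I (u ++ (r ++ s)) := E rfl Hv
            _ = mkT I (u ++ (r ++ ([b, b] ++ σ))) := E rfl (E rfl Hs)
            _ = mkT I ((u ++ r) ++ (b :: b :: σ)) := listeq (by simp)
        · calc mkT I ((α ++ (r ++ β)) ++ σ) = mkT I (α ++ (r ++ (β ++ σ))) := listeq (by simp)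
            _ = mkT I (α ++ (β ++ (r ++ σ))) := E rfl (comm3 _ (indep_symm hsym hβr))
            _ = mkT I ((α ++ β) ++ (r ++ σ)) := listeq (by simp)
            _ = mkT I (u ++ (r ++ σ)) := E Hu2.symm rfl
            _ = mkT I ((u ++ r) ++ σ) := listeq (by simp)
      · refine rw_step (c := a) (x := α ++ (r ++ β)) (y := σ) ?_ rfl
        calc mkT I (u' ++ v') = mkT I ((p ++ r) ++ (ρ ++ σ)) := E Hu' Hv'
          _ = mkT I (p ++ (r ++ (ρ ++ σ))) := listeq (by simp)
          _ = mkT I ((α ++ [a]) ++ (r ++ (ρ ++ σ))) := E Hp rfl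
          _ = mkT I ((α ++ [a]) ++ (r ++ ((β ++ [a]) ++ σ))) :=
              E rfl (E rfl (E (Hq2'.symm.trans Hq) rfl))
          _ = mkT I (α ++ ([a] ++ (r ++ (β ++ ([a] ++ σ))))) := listeq (by simp)
          _ = mkT I (α ++ (r ++ ([a] ++ (β ++ ([a] ++ σ))))) := E rfl (comm3 _ hIar)
          _ = mkT I (α ++ (r ++ (β ++ ([a] ++ ([a] ++ σ))))) := E rfl (E rfl (comm3 _ hIaβ))
          _ = mkT I ((α ++ (r ++ β)) ++ (a :: a :: σ)) := listeq (by simp)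
    · -- M3 : μ = [y1] = [b], ν = [b]
      obtain ⟨rfl, rfl⟩ : b = y1 ∧ ν = [b] := by
        have h' : y1 :: ν = [b, b] := by simpa using hmn
        simp at h'
        exact ⟨h'.1.symm, h'.2⟩
      have hq3 : mkT I (β ++ [a]) = mkT I ([b] ++ ρ) := Hq.symm.trans Hq2
      obtain ⟨κ, lam, τ, θ, Hβ2, Ha2, Hb2, Hρ, Hlt⟩ := levi hirr hsym _ _ _ _ hq3
      have htt : τ ++ θ = [a] := rigid_one (I := I) Ha2.symm
      rcases τ with _ | ⟨z1, τ'⟩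
      · -- Tb : τ = [], θ = [a] ; κ = [b]
        simp only [List.nil_append] at htt
        subst htt
        have hk : κ = [b] := by simpa using rigid_one (I := I) (by simpa using Hb2.symm)
        subst hk
        have mlro : ∀ x ∈ lam, x ∈ ρ := fun x hx => memsub Hρ x (by simp [hx])
        have mlq : ∀ x ∈ lam, x ∈ q := fun x hx => memsub Hq2 x (by simp [mlro x hx])
        have hlr : Indep I lam r := indep_of_mem Hqr mlq (fun y hy => hy)
        have hbq : b ∈ q := memsub Hq2 b (by simp)
        have hIbl : Indep I [b] lam := indep_of_mem Hνρ (fun x hx => hx) mlro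
        have hIbr : Indep I [b] r :=
          indep_of_mem Hqr (fun x hx => by simp at hx; subst hx; exact hbq) (fun y hy => hy)
        have hIal : Indep I [a] lam :=
          indep_single_of hsym (fun y hy => Hβγ y (memsub Hβ2 y (by simp [hy])) a (by simp))
        refine Or.inr ⟨mkT I (α ++ (lam ++ (r ++ σ))), ?_, ?_⟩
        · refine rw_step (c := b) (x := α ++ (lam ++ r)) (y := σ) ?_ (listeq (by simp))
          calc mkT I (u ++ v) = mkT I ((α ++ β) ++ (r ++ s)) := E Hu2 Hv
            _ = mkT I (α ++ (β ++ (r ++ s))) := listeq (by simp)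
            _ = mkT I (α ++ (([b] ++ lam) ++ (r ++ ([b] ++ σ)))) := E rfl (E Hβ2 (E rfl Hs))
            _ = mkT I (α ++ ([b] ++ (lam ++ (r ++ ([b] ++ σ))))) := listeq (by simp)
            _ = mkT I (α ++ (lam ++ ([b] ++ (r ++ ([b] ++ σ))))) := E rfl (comm3 _ hIbl)
            _ = mkT I (α ++ (lam ++ (r ++ ([b] ++ ([b] ++ σ))))) := E rfl (E rfl (comm3 _ hIbr))
            _ = mkT I ((α ++ (lam ++ r)) ++ (b :: b :: σ)) := listeq (by simp)
        · refine rw_step (c := a) (x := α ++ (r ++ lam)) (y := σ) ?_ ?_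
          · calc mkT I (u' ++ v') = mkT I ((p ++ r) ++ (ρ ++ σ)) := E Hu' Hv'
              _ = mkT I (p ++ (r ++ (ρ ++ σ))) := listeq (by simp)
              _ = mkT I ((α ++ [a]) ++ (r ++ ((lam ++ [a]) ++ σ))) := E Hp (E rfl (E Hρ rfl))
              _ = mkT I (α ++ ([a] ++ (r ++ (lam ++ ([a] ++ σ))))) := listeq (by simp)
              _ = mkT I (α ++ (r ++ ([a] ++ (lam ++ ([a] ++ σ))))) := E rfl (comm3 _ hIar)
              _ = mkT I (α ++ (r ++ (lam ++ ([a] ++ ([a] ++ σ))))) := E rfl (E rfl (comm3 _ hIal))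
              _ = mkT I ((α ++ (r ++ lam)) ++ (a :: a :: σ)) := listeq (by simp)
          · calc mkT I (α ++ (lam ++ (r ++ σ)))
                = mkT I (α ++ (r ++ (lam ++ σ))) := E rfl (comm3 _ hlr)
              _ = mkT I ((α ++ (r ++ lam)) ++ σ) := listeq (by simp)
      · -- Ta : τ = [z1] = [a], θ = [] ; κ ++ [a] = [b] so κ = [], a = b : reducts equal
        obtain ⟨rfl, rfl, rfl⟩ : a = z1 ∧ τ' = [] ∧ θ = [] := by
          have h1 : z1 :: (τ' ++ θ) = [a] := by simpa using htt
          have h2 := congrArg List.length h1; simp at h2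
          obtain ⟨rfl, rfl⟩ := h2
          simp at h1
          exact ⟨h1.symm, rfl, rfl⟩
        have hk : κ = [] ∧ a = b := snoc_eq_single (rigid_one (I := I) (by simpa using Hb2.symm))
        obtain ⟨rfl, rfl⟩ := hk
        have Hβ2' : mkT I β = mkT I lam := by simpa using Hβ2
        have Hρ' : mkT I ρ = mkT I lam := by simpa using Hρ
        refine Or.inl ?_
        have hy : mkT I (u ++ v) = mkT I (α ++ (r ++ (β ++ ([a] ++ σ)))) := by
          calc mkT I (u ++ v) = mkT I ((α ++ β) ++ (r ++ s)) := E Hu2 Hv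
            _ = mkT I (α ++ (β ++ (r ++ ([a] ++ σ)))) := (listeq (by simp)).trans
                (E rfl (E rfl (E rfl Hs)))
            _ = mkT I (α ++ (r ++ (β ++ ([a] ++ σ)))) := E rfl (comm3 _ hβr)
        have hz : mkT I (u' ++ v') = mkT I (α ++ (r ++ (β ++ ([a] ++ σ)))) := by
          calc mkT I (u' ++ v') = mkT I ((p ++ r) ++ (ρ ++ σ)) := E Hu' Hv'
            _ = mkT I ((α ++ [a]) ++ (r ++ (β ++ σ))) :=
                (listeq (by simp)).trans (E Hp (E rfl (E (Hρ'.trans Hβ2'.symm) rfl)))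
            _ = mkT I (α ++ ([a] ++ (r ++ (β ++ σ)))) := listeq (by simp)
            _ = mkT I (α ++ (r ++ ([a] ++ (β ++ σ)))) := E rfl (comm3 _ hIar)
            _ = mkT I (α ++ (r ++ (β ++ ([a] ++ σ)))) := E rfl (E rfl (comm3 _ hIaβ))
        exact hy.trans hz.symm
    · -- M1 : μ = [b,b], ν = []
      obtain ⟨rfl, rfl, rfl, rfl⟩ : b = y1 ∧ b = y2 ∧ μ₂ = [] ∧ ν = [] := by
        have h1 : y1 :: y2 :: (μ₂ ++ ν) = [b, b] := by simpa using hmn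
        have h2 := congrArg List.length h1; simp at h2
        obtain ⟨rfl, rfl⟩ := h2
        simp at h1
        exact ⟨h1.1.symm, h1.2.symm, rfl, rfl⟩
      have Hs' : mkT I s = mkT I σ := by simpa using Hs
      have hq3 : mkT I (β ++ [a]) = mkT I ([b, b] ++ ρ) := Hq.symm.trans (by simpa using Hq2)
      obtain ⟨κ, lam, τ, θ, Hβ2, Ha2, Hbb2, Hρ, Hlt⟩ := levi hirr hsym _ _ _ _ hq3
      have htt : τ ++ θ = [a] := rigid_one (I := I) Ha2.symm
      rcases τ with _ | ⟨z1, τ'⟩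
      · -- Tb : τ = [], θ = [a] ; κ = [b,b]
        simp only [List.nil_append] at htt
        subst htt
        have hk : κ = [b, b] := by simpa using rigid_sq hirr hsym (by simpa using Hbb2.symm)
        subst hk
        have mlq : ∀ x ∈ lam, x ∈ q := fun x hx => mβq x (memsub Hβ2 x (by simp [hx]))
        have hlr : Indep I lam r := indep_of_mem Hqr mlq (fun y hy => hy)
        have hIal : Indep I [a] lam :=
          indep_single_of hsym (fun y hy => Hβγ y (memsub Hβ2 y (by simp [hy])) a (by simp))
        refine Or.inr ⟨mkT I (α ++ (lam ++ (r ++ σ))), ?_, ?_⟩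
        · refine rw_step (c := b) (x := α) (y := lam ++ (r ++ σ)) ?_ rfl
          calc mkT I (u ++ v) = mkT I ((α ++ β) ++ (r ++ s)) := E Hu2 Hv
            _ = mkT I (α ++ (([b, b] ++ lam) ++ (r ++ σ))) :=
                (listeq (by simp)).trans (E rfl (E Hβ2 (E rfl Hs')))
            _ = mkT I (α ++ (b :: b :: (lam ++ (r ++ σ)))) := listeq (by simp)
        · refine rw_step (c := a) (x := α ++ (r ++ lam)) (y := σ) ?_ ?_
          · calc mkT I (u' ++ v') = mkT I ((p ++ r) ++ (ρ ++ σ)) := E Hu' Hv'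
              _ = mkT I ((α ++ [a]) ++ (r ++ ((lam ++ [a]) ++ σ))) :=
                  (listeq (by simp)).trans (E Hp (E rfl (E Hρ rfl)))
              _ = mkT I (α ++ ([a] ++ (r ++ (lam ++ ([a] ++ σ))))) := listeq (by simp)
              _ = mkT I (α ++ (r ++ ([a] ++ (lam ++ ([a] ++ σ))))) := E rfl (comm3 _ hIar)
              _ = mkT I (α ++ (r ++ (lam ++ ([a] ++ ([a] ++ σ))))) := E rfl (E rfl (comm3 _ hIal))
              _ = mkT I ((α ++ (r ++ lam)) ++ (a :: a :: σ)) := listeq (by simp)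
          · calc mkT I (α ++ (lam ++ (r ++ σ)))
                = mkT I (α ++ (r ++ (lam ++ σ))) := E rfl (comm3 _ hlr)
              _ = mkT I ((α ++ (r ++ lam)) ++ σ) := listeq (by simp)
      · -- Ta : τ = [z1] = [a] ; κ ++ [a] = [b,b] so κ = [b], a = b : a ∈ β contradiction
        obtain ⟨rfl, rfl, rfl⟩ : a = z1 ∧ τ' = [] ∧ θ = [] := by
          have h1 : z1 :: (τ' ++ θ) = [a] := by simpa using htt
          have h2 := congrArg List.length h1; simp at h2
          obtain ⟨rfl, rfl⟩ := h2
          simp at h1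
          exact ⟨h1.symm, rfl, rfl⟩
        have hk : κ = [b] ∧ a = b := snoc_eq_pair (rigid_sq hirr hsym (by simpa using Hbb2.symm))
        obtain ⟨rfl, hab⟩ := hk
        exfalso
        have haβ : a ∈ β := memsub Hβ2 a (by simp [hab])
        exact hirr a (Hβγ a haβ a (by simp))
  · -- G1 : γ = x1 :: x2 :: γ₂ = [a,a], δ = []
    obtain ⟨rfl, rfl, rfl, rfl⟩ : a = x1 ∧ a = x2 ∧ γ₂ = [] ∧ δ = [] := by
      have h1 : x1 :: x2 :: (γ₂ ++ δ) = [a, a] := by simpa using hgd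
      have h2 := congrArg List.length h1; simp at h2
      obtain ⟨rfl, rfl⟩ := h2
      simp at h1
      exact ⟨h1.1.symm, h1.2.symm, rfl, rfl⟩
    have Hq' : mkT I q = mkT I β := by simpa using Hq
    have hβr : Indep I β r :=
      indep_of_mem Hqr (fun x hx => memsub Hq' x hx) (fun y hy => hy)
    refine Or.inr ⟨mkT I ((α ++ r) ++ v'), ?_, ?_⟩
    · refine rw_step (c := b) (x := α ++ r) (y := v') ?_ rfl
      calc mkT I (u ++ v) = mkT I ((α ++ β) ++ (r ++ s)) := E Hu2 Hv
        _ = mkT I (α ++ (β ++ (r ++ s))) := listeq (by simp)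
        _ = mkT I (α ++ (r ++ (β ++ s))) := E rfl (comm3 _ hβr)
        _ = mkT I (α ++ (r ++ (q ++ s))) := E rfl (E rfl (E Hq'.symm rfl))
        _ = mkT I (α ++ (r ++ ([b, b] ++ v'))) := E rfl (E rfl Hbv.symm)
        _ = mkT I ((α ++ r) ++ (b :: b :: v')) := listeq (by simp)
    · refine rw_step (c := a) (x := α) (y := r ++ v') ?_ (listeq (by simp))
      calc mkT I (u' ++ v') = mkT I ((p ++ r) ++ v') := E Hu' rfl
        _ = mkT I (p ++ (r ++ v')) := listeq (by simp)
        _ = mkT I ((α ++ [a, a]) ++ (r ++ v')) := E Hp rfl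
        _ = mkT I (α ++ (a :: a :: (r ++ v'))) := listeq (by simp)

end RacAux

namespace RacAux

set_option linter.unusedSectionVars false

variable {S : Type*} [DecidableEq S] {I : S → S → Prop}

def delStep (u v : List S) : Prop :=
  ∃ (p s : List S) (a : S), u = p ++ a :: a :: s ∧ v = p ++ s

def fullStep (I : S → S → Prop) (u v : List S) : Prop :=
  swapStep I u v ∨ delStep u v

def CW (I : S → S → Prop) : Type _ := Quotient (Relation.EqvGen.setoid (fullStep I))

def mkC (I : S → S → Prop) (w : List S) : CW I :=
  Quotient.mk (Relation.EqvGen.setoid (fullStep I)) w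

lemma fullStep_context {u v : List S} (x y : List S) (h : fullStep I u v) :
    fullStep I (x ++ u ++ y) (x ++ v ++ y) := by
  rcases h with h | ⟨p, s, a, rfl, rfl⟩
  · exact Or.inl (swapStep_context x y h)
  · exact Or.inr ⟨x ++ p, s ++ y, a, by simp, by simp⟩

lemma eqvF_context {u v : List S} (x y : List S) (h : Relation.EqvGen (fullStep I) u v) :
    Relation.EqvGen (fullStep I) (x ++ u ++ y) (x ++ v ++ y) := by
  induction h with
  | rel a b hab => exact Relation.EqvGen.rel _ _ (fullStep_context x y hab)
  | refl a => exact Relation.EqvGen.refl _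
  | symm a b _ ih => exact Relation.EqvGen.symm _ _ ih
  | trans a b c _ _ ih1 ih2 => exact Relation.EqvGen.trans _ _ _ ih1 ih2

lemma eqvF_append {u u' v v' : List S} (h1 : Relation.EqvGen (fullStep I) u u')
    (h2 : Relation.EqvGen (fullStep I) v v') :
    Relation.EqvGen (fullStep I) (u ++ v) (u' ++ v') := by
  have a1 := eqvF_context [] v h1
  have a2 := eqvF_context u' [] h2
  simp at a1 a2
  exact Relation.EqvGen.trans _ _ _ a1 a2

lemma eqvF_reverse {u v : List S} (h : Relation.EqvGen (fullStep I) u v) :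
    Relation.EqvGen (fullStep I) u.reverse v.reverse := by
  induction h with
  | rel x y hxy =>
      rcases hxy with ⟨p, s, a, b, hab, rfl, rfl⟩ | ⟨p, s, a, rfl, rfl⟩
      · refine Relation.EqvGen.symm _ _ (Relation.EqvGen.rel _ _ (Or.inl
          ⟨s.reverse, p.reverse, a, b, hab, by simp, by simp⟩))
      · exact Relation.EqvGen.rel _ _ (Or.inr ⟨s.reverse, p.reverse, a, by simp, by simp⟩)
  | refl x => exact Relation.EqvGen.refl _
  | symm a b _ ih => exact Relation.EqvGen.symm _ _ ih
  | trans a b c _ _ ih1 ih2 => exact Relation.EqvGen.trans _ _ _ ih1 ih2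

lemma eqvF_rev_append : ∀ (w : List S), Relation.EqvGen (fullStep I) (w.reverse ++ w) [] := by
  intro w
  induction w with
  | nil => exact Relation.EqvGen.refl _
  | cons a t ih =>
      have h1 : (a :: t).reverse ++ (a :: t) = t.reverse ++ (a :: a :: t) := by simp
      have h2 : Relation.EqvGen (fullStep I) (t.reverse ++ (a :: a :: t)) (t.reverse ++ t) :=
        Relation.EqvGen.rel _ _ (Or.inr ⟨t.reverse, t, a, rfl, rfl⟩)
      rw [h1]
      exact Relation.EqvGen.trans _ _ _ h2 ih

instance cwGroup : Group (CW I) where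
  mul := Quotient.map₂ (· ++ ·) (fun _ _ h1 _ _ h2 => eqvF_append h1 h2)
  one := mkC I []
  inv := Quotient.map List.reverse (fun _ _ h => eqvF_reverse h)
  mul_assoc := by
    rintro ⟨u⟩ ⟨v⟩ ⟨w⟩
    exact congrArg (Quotient.mk _) (List.append_assoc u v w)
  one_mul := by rintro ⟨u⟩; rfl
  mul_one := by
    rintro ⟨u⟩
    exact congrArg (Quotient.mk _) (List.append_nil u)
  inv_mul_cancel := by
    rintro ⟨u⟩
    exact Quotient.sound (eqvF_rev_append u)

lemma cw_mk_mul (u v : List S) : mkC I u * mkC I v = mkC I (u ++ v) := rfl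

lemma cw_mk_inv (u : List S) : (mkC I u)⁻¹ = mkC I u.reverse := rfl

lemma cw_one : (1 : CW I) = mkC I [] := rfl

lemma pg_rel_eval : ∀ r ∈ racRels I, FreeGroup.lift (fun a => mkC I [a]) r = 1 := by
  rintro r (⟨a, rfl⟩ | ⟨a, b, hab, rfl⟩)
  · rw [map_mul, FreeGroup.lift_apply_of, cw_mk_mul]
    exact Quotient.sound (Relation.EqvGen.rel _ _ (Or.inr ⟨[], [], a, rfl, rfl⟩))
  · rw [map_mul, map_mul, map_mul, map_inv, map_inv, FreeGroup.lift_apply_of, FreeGroup.lift_apply_of,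
      cw_mk_inv]
    show mkC I [a] * mkC I [b] * mkC I [a] * mkC I [b] = 1
    rw [cw_mk_mul, cw_mk_mul, cw_mk_mul]
    show mkC I [a, b, a, b] = mkC I []
    refine Quotient.sound ?_
    refine Relation.EqvGen.trans _ [b, a, a, b] _
      (Relation.EqvGen.rel _ _ (Or.inl ⟨[], [a, b], a, b, hab, rfl, rfl⟩)) ?_
    refine Relation.EqvGen.trans _ [b, b] _
      (Relation.EqvGen.rel _ _ (Or.inr ⟨[b], [b], a, rfl, rfl⟩)) ?_
    exact Relation.EqvGen.rel _ _ (Or.inr ⟨[], [], b, rfl, rfl⟩)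

noncomputable def pgToCW (I : S → S → Prop) : PresentedGroup (racRels I) →* CW I :=
  PresentedGroup.toGroup (f := fun a => mkC I [a]) pg_rel_eval

lemma pgToCW_racEval (w : List S) : pgToCW I (racEval I w) = mkC I w := by
  induction w with
  | nil =>
      have h0 : racEval I ([] : List S) = 1 := rfl
      rw [h0, map_one]; rfl
  | cons a t ih =>
      have h1 : racEval I (a :: t) = PresentedGroup.of (rels := racRels I) a * racEval I t := by
        simp [racEval]
      rw [h1, map_mul, ih]
      have h2 : pgToCW I (PresentedGroup.of (rels := racRels I) a) = mkC I [a] :=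
        PresentedGroup.toGroup.of pg_rel_eval
      rw [h2, cw_mk_mul]
      rfl

lemma eqvF_to_rw {u v : List S} (h : Relation.EqvGen (fullStep I) u v) :
    Relation.EqvGen (RwC I) (mkT I u) (mkT I v) := by
  induction h with
  | rel x y hxy =>
      rcases hxy with hsw | ⟨p, s, a, rfl, rfl⟩
      · rw [mkT_sound (Relation.EqvGen.rel _ _ hsw)]
        exact Relation.EqvGen.refl _
      · exact Relation.EqvGen.rel _ _ ⟨a, p, s, rfl, rfl⟩
  | refl x => exact Relation.EqvGen.refl _
  | symm a b _ ih => exact Relation.EqvGen.symm _ _ ih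
  | trans a b c _ _ ih1 ih2 => exact Relation.EqvGen.trans _ _ _ ih1 ih2

variable (hirr : ∀ a : S, ¬ I a a) (hsym : ∀ a b : S, I a b → I b a)

include hirr hsym

lemma local_conf : ∀ x y z : Trace I, RwC I x y → RwC I x z →
    ∃ d, Relation.ReflGen (RwC I) y d ∧ Relation.ReflTransGen (RwC I) z d := by
  rintro x y z ⟨a1, u1, v1, rfl, rfl⟩ ⟨a2, u2, v2, hx, rfl⟩
  rcases strong_conf hirr hsym hx with heq | ⟨w, hw1, hw2⟩
  · exact ⟨mkT I (u2 ++ v2), by rw [heq], Relation.ReflTransGen.refl⟩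
  · exact ⟨w, Relation.ReflGen.single hw1, Relation.ReflTransGen.single hw2⟩

lemma eqv_join {x y : Trace I} (h : Relation.EqvGen (RwC I) x y) :
    Relation.Join (Relation.ReflTransGen (RwC I)) x y := by
  have hcr := Relation.equivalence_join_reflTransGen (r := RwC I) (local_conf hirr hsym)
  induction h with
  | rel a b hab => exact ⟨b, Relation.ReflTransGen.single hab, Relation.ReflTransGen.refl⟩
  | refl a => exact hcr.refl a
  | symm a b _ ih => exact hcr.symm ih
  | trans a b c _ _ ih1 ih2 => exact hcr.trans ih1 ih2

omit hirr hsym in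
lemma lenT_mk (w : List S) : lenT I (mkT I w) = w.length := rfl

omit hirr hsym in
lemma rw_length {x y : Trace I} (h : RwC I x y) : lenT I y < lenT I x := by
  obtain ⟨a, u, v, rfl, rfl⟩ := h
  simp [lenT_mk]

omit hirr hsym in
lemma rtg_length {x y : Trace I} (h : Relation.ReflTransGen (RwC I) x y) :
    lenT I y ≤ lenT I x := by
  induction h with
  | refl => exact le_refl _
  | tail _ hstep ih => exact le_trans (le_of_lt (rw_length hstep)) ih

omit hirr hsym in
lemma exists_nf (x : Trace I) : ∃ n, IrrC I n ∧ Relation.ReflTransGen (RwC I) x n := by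
  classical
  suffices H : ∀ (k : ℕ) (x : Trace I), lenT I x ≤ k →
      ∃ n, IrrC I n ∧ Relation.ReflTransGen (RwC I) x n from H (lenT I x) x le_rfl
  intro k
  induction k with
  | zero =>
      intro x hx
      by_cases h : ∃ y, RwC I x y
      · obtain ⟨y, hy⟩ := h
        have := rw_length hy
        omega
      · push_neg at h
        exact ⟨x, fun y hy => h y hy, Relation.ReflTransGen.refl⟩
  | succ k ih =>
      intro x hx
      by_cases h : ∃ y, RwC I x y
      · obtain ⟨y, hy⟩ := h
        have hl := rw_length hy
        obtain ⟨n, hn1, hn2⟩ := ih y (by omega)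
        exact ⟨n, hn1, Relation.ReflTransGen.head hy hn2⟩
      · push_neg at h
        exact ⟨x, fun y hy => h y hy, Relation.ReflTransGen.refl⟩

omit hirr hsym in
lemma irr_rtg {n m : Trace I} (hn : IrrC I n) (h : Relation.ReflTransGen (RwC I) n m) :
    n = m := by
  rcases Relation.ReflTransGen.cases_head h with rfl | ⟨c, hc, -⟩
  · rfl
  · exact absurd hc (hn c)

omit hirr hsym in
lemma rtg_to_eqv {x y : Trace I} (h : Relation.ReflTransGen (RwC I) x y) :
    Relation.EqvGen (RwC I) x y := by
  induction h with
  | refl => exact Relation.EqvGen.refl _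
  | tail _ hstep ih => exact Relation.EqvGen.trans _ _ _ ih (Relation.EqvGen.rel _ _ hstep)

end RacAux


namespace RacAux

set_option linter.unusedSectionVars false

variable {S : Type*} [DecidableEq S] {I : S → S → Prop}

lemma pg_of_sq (a : S) :
    PresentedGroup.of (rels := racRels I) a * PresentedGroup.of (rels := racRels I) a = 1 := by
  have h1 : PresentedGroup.of (rels := racRels I) a * PresentedGroup.of (rels := racRels I) a =
      PresentedGroup.mk (racRels I) (FreeGroup.of a * FreeGroup.of a) := (map_mul _ _ _).symm
  rw [h1]
  exact (QuotientGroup.eq_one_iff _).mpr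
    (Subgroup.subset_normalClosure (Or.inl ⟨a, rfl⟩))

lemma pg_of_comm {a b : S} (hab : I a b) :
    PresentedGroup.of (rels := racRels I) a * PresentedGroup.of (rels := racRels I) b =
      PresentedGroup.of (rels := racRels I) b * PresentedGroup.of (rels := racRels I) a := by
  have h1 : PresentedGroup.of (rels := racRels I) a * PresentedGroup.of (rels := racRels I) b *
      (PresentedGroup.of (rels := racRels I) a)⁻¹ *
      (PresentedGroup.of (rels := racRels I) b)⁻¹ = 1 := by
    have h0 : PresentedGroup.of (rels := racRels I) a * PresentedGroup.of (rels := racRels I) b *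
        (PresentedGroup.of (rels := racRels I) a)⁻¹ *
        (PresentedGroup.of (rels := racRels I) b)⁻¹ =
        PresentedGroup.mk (racRels I) (FreeGroup.of a * FreeGroup.of b * (FreeGroup.of a)⁻¹ *
          (FreeGroup.of b)⁻¹) := by
      simp [map_mul, map_inv]
      rfl
    rw [h0]
    exact (QuotientGroup.eq_one_iff _).mpr
      (Subgroup.subset_normalClosure (Or.inr ⟨a, b, hab, rfl⟩))
  have h2 := mul_inv_eq_one.mp h1
  calc PresentedGroup.of (rels := racRels I) a * PresentedGroup.of (rels := racRels I) b
      = (PresentedGroup.of (rels := racRels I) a * PresentedGroup.of (rels := racRels I) b *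
        (PresentedGroup.of (rels := racRels I) a)⁻¹) * PresentedGroup.of (rels := racRels I) a := by
        group
    _ = PresentedGroup.of (rels := racRels I) b * PresentedGroup.of (rels := racRels I) a := by
        rw [h2]

lemma racEval_swap {p s : List S} {a b : S} (hab : I a b) :
    racEval I (p ++ a :: b :: s) = racEval I (p ++ b :: a :: s) := by
  simp only [racEval, List.map_append, List.prod_append, List.map_cons, List.prod_cons]
  congr 1
  rw [← mul_assoc, ← mul_assoc, pg_of_comm hab]

lemma racEval_of_mkT_eq {u v : List S} (h : mkT I u = mkT I v) :
    racEval I u = racEval I v := by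
  have h' := mkT_exact h
  clear h
  induction h' with
  | rel x y hxy =>
      obtain ⟨p, s, a, b, hab, rfl, rfl⟩ := hxy
      exact racEval_swap hab
  | refl x => rfl
  | symm x y _ ih => exact ih.symm
  | trans x y z _ _ ih1 ih2 => exact ih1.trans ih2

lemma racEval_del (u v : List S) (a : S) :
    racEval I (u ++ a :: a :: v) = racEval I (u ++ v) := by
  simp only [racEval, List.map_append, List.prod_append, List.map_cons, List.prod_cons]
  congr 1
  rw [← mul_assoc, pg_of_sq, one_mul]

lemma racEval_rtg {x y : Trace I} (h : Relation.ReflTransGen (RwC I) x y) :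
    ∀ u v : List S, x = mkT I u → y = mkT I v → racEval I v = racEval I u := by
  induction h with
  | refl =>
      intro u v hu hv
      exact (racEval_of_mkT_eq (hu.symm.trans hv)).symm
  | tail h1 hstep ih =>
      intro u v hu hv
      obtain ⟨a, w1, w2, hb, hc⟩ := hstep
      have e1 := ih u (w1 ++ a :: a :: w2) hu hb
      have e2 : racEval I (w1 ++ w2) = racEval I (w1 ++ a :: a :: w2) := (racEval_del _ _ _).symm
      have e3 : racEval I v = racEval I (w1 ++ w2) := racEval_of_mkT_eq (hv.symm.trans hc)
      exact e3.trans (e2.trans e1)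

end RacAux

/-- The trace rewriting system `S_C = {a² → 1 | a ∈ Σ}` on `M(Σ, I)` is length-reducing
and strongly confluent, and the irreducible traces form a set of unique normal forms for
the right-angled Coxeter group `C(Σ, I)` of geodesic length: every trace reduces to a
unique irreducible trace, rewriting preserves the group element, irreducible traces
representing the same group element are equal, and irreducible representatives have
minimal length among all words representing the same group element. -/
theorem racTraceSystem_confluent_normalForms {S : Type*} [DecidableEq S]
    (I : S → S → Prop) (hirr : ∀ a, ¬ I a a) (hsym : ∀ a b, I a b → I b a) :
    (∀ x y : Trace I, RwC I x y → lenT I y < lenT I x) ∧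
    (∀ x y z : Trace I, RwC I x y → RwC I x z → y ≠ z →
      ∃ w : Trace I, (RwC I y w ∨ y = w) ∧ (RwC I z w ∨ z = w)) ∧
    (∀ x : Trace I, ∃! n : Trace I, IrrC I n ∧ Relation.ReflTransGen (RwC I) x n) ∧
    (∀ u v : List S, Relation.ReflTransGen (RwC I) (mkT I u) (mkT I v) →
      racEval I v = racEval I u) ∧
    (∀ u v : List S, IrrC I (mkT I u) → IrrC I (mkT I v) →
      (racEval I u = racEval I v ↔ mkT I u = mkT I v)) ∧
    (∀ u v : List S, IrrC I (mkT I u) → racEval I u = racEval I v →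
      u.length ≤ v.length) := by
  classical
  refine ⟨?_, ?_, ?_, ?_, ?_, ?_⟩
  · intro x y h
    exact RacAux.rw_length h
  · rintro x y z ⟨a1, u1, v1, rfl, rfl⟩ ⟨a2, u2, v2, hx, rfl⟩ hne
    rcases RacAux.strong_conf hirr hsym hx with heq | ⟨w, hw1, hw2⟩
    · exact absurd heq hne
    · exact ⟨w, Or.inl hw1, Or.inl hw2⟩
  · intro x
    obtain ⟨n, hn1, hn2⟩ := RacAux.exists_nf x
    refine ⟨n, ⟨hn1, hn2⟩, ?_⟩
    rintro m ⟨hm1, hm2⟩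
    have hE : Relation.EqvGen (RwC I) m n :=
      Relation.EqvGen.trans _ _ _ (Relation.EqvGen.symm _ _ (RacAux.rtg_to_eqv hm2))
        (RacAux.rtg_to_eqv hn2)
    obtain ⟨d, hd1, hd2⟩ := RacAux.eqv_join hirr hsym hE
    rw [RacAux.irr_rtg hm1 hd1, RacAux.irr_rtg hn1 hd2]
  · intro u v h
    exact RacAux.racEval_rtg h u v rfl rfl
  · intro u v hu hv
    constructor
    · intro h
      have h1 : RacAux.mkC I u = RacAux.mkC I v := by
        have h0 := congrArg (RacAux.pgToCW I) h
        rwa [RacAux.pgToCW_racEval, RacAux.pgToCW_racEval] at h0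
      have h3 := RacAux.eqvF_to_rw (Quotient.exact h1)
      obtain ⟨d, hd1, hd2⟩ := RacAux.eqv_join hirr hsym h3
      rw [RacAux.irr_rtg hu hd1, RacAux.irr_rtg hv hd2]
    · intro h
      exact RacAux.racEval_of_mkT_eq h
  · intro u v hu h
    have h1 : RacAux.mkC I u = RacAux.mkC I v := by
      have h0 := congrArg (RacAux.pgToCW I) h
      rwa [RacAux.pgToCW_racEval, RacAux.pgToCW_racEval] at h0
    have h3 := RacAux.eqvF_to_rw (Quotient.exact h1)
    obtain ⟨d, hd1, hd2⟩ := RacAux.eqv_join hirr hsym h3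
    have hd : d = mkT I u := (RacAux.irr_rtg hu hd1).symm
    rw [hd] at hd2
    have hlen := RacAux.rtg_length hd2
    simpa [RacAux.lenT_mk] using hlen
end

section
/- Let u be a trace in M(Σ,I) and a∈Σ. Then u is a-short (i.e., the rule a²→1 is never applied in reducing u to its S_C-normal form; equivalently the letter a occurs equally often in u and in its Coxeter normal form) if and only if u has no factor of the form a v a with α̂(v) ⊆ I(a), where α̂(v) is the alphabet of the Coxeter normal form of v and I(a) = {b | (a,b)∈I}. -/
set_option linter.unusedSectionVars false
set_option maxHeartbeats 1000000


namespace AShort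

variable {S : Type*} [DecidableEq S] {I : S → S → Prop}

theorem teq_refl (w : List S) : traceEq I w w := Relation.EqvGen.refl w

theorem teq_symm {u v : List S} (h : traceEq I u v) : traceEq I v u :=
  Relation.EqvGen.symm _ _ h

theorem teq_trans {u v w : List S} (h1 : traceEq I u v) (h2 : traceEq I v w) :
    traceEq I u w := Relation.EqvGen.trans _ _ _ h1 h2

theorem swap_symm (hsym : ∀ a b, I a b → I b a) {u v : List S}
    (h : swapStep I u v) : swapStep I v u := by
  obtain ⟨p, s, a, b, hI, hu, hv⟩ := h
  exact ⟨p, s, b, a, hsym _ _ hI, hv, hu⟩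

theorem teq_to_rtg (hsym : ∀ a b, I a b → I b a) {u v : List S}
    (h : traceEq I u v) : Relation.ReflTransGen (swapStep I) u v := by
  induction h with
  | rel x y hxy => exact Relation.ReflTransGen.single hxy
  | refl x => exact Relation.ReflTransGen.refl
  | symm x y _ ih =>
      exact (@Relation.ReflTransGen.stdSymm _ _ ⟨fun a b hab => swap_symm hsym hab⟩).symm _ _ ih
  | trans x y z _ _ ih1 ih2 => exact ih1.trans ih2

theorem rtg_to_teq {u v : List S}
    (h : Relation.ReflTransGen (swapStep I) u v) : traceEq I u v := by
  induction h with
  | refl => exact teq_refl u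
  | tail _ hstep ih => exact teq_trans ih (Relation.EqvGen.rel _ _ hstep)

theorem teq_perm {u v : List S} (h : traceEq I u v) : u.Perm v := by
  induction h with
  | rel x y hxy =>
      obtain ⟨p, s, a, b, _, hx, hy⟩ := hxy
      subst hx; subst hy
      exact (List.Perm.append_left p (List.Perm.swap b a s))
  | refl x => exact List.Perm.refl x
  | symm x y _ ih => exact ih.symm
  | trans x y z _ _ ih1 ih2 => exact ih1.trans ih2

theorem swap_append_left (p : List S) {x y : List S} (h : swapStep I x y) :
    swapStep I (p ++ x) (p ++ y) := by
  obtain ⟨q, s, a, b, hI, hx, hy⟩ := h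
  exact ⟨p ++ q, s, a, b, hI, by simp [hx], by simp [hy]⟩

theorem swap_append_right (s : List S) {x y : List S} (h : swapStep I x y) :
    swapStep I (x ++ s) (y ++ s) := by
  obtain ⟨q, r, a, b, hI, hx, hy⟩ := h
  exact ⟨q, r ++ s, a, b, hI, by simp [hx], by simp [hy]⟩

theorem teq_append_left (p : List S) {x y : List S} (h : traceEq I x y) :
    traceEq I (p ++ x) (p ++ y) := by
  induction h with
  | rel x y hxy => exact Relation.EqvGen.rel _ _ (swap_append_left p hxy)
  | refl x => exact teq_refl _
  | symm x y _ ih => exact teq_symm ih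
  | trans x y z _ _ ih1 ih2 => exact teq_trans ih1 ih2

theorem teq_append_right (s : List S) {x y : List S} (h : traceEq I x y) :
    traceEq I (x ++ s) (y ++ s) := by
  induction h with
  | rel x y hxy => exact Relation.EqvGen.rel _ _ (swap_append_right s hxy)
  | refl x => exact teq_refl _
  | symm x y _ ih => exact teq_symm ih
  | trans x y z _ _ ih1 ih2 => exact teq_trans ih1 ih2

theorem teq_cons (c : S) {x y : List S} (h : traceEq I x y) :
    traceEq I (c :: x) (c :: y) := teq_append_left [c] h

theorem teq_append {x y x' y' : List S} (h1 : traceEq I x x') (h2 : traceEq I y y') :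
    traceEq I (x ++ y) (x' ++ y') :=
  teq_trans (teq_append_right y h1) (teq_append_left x' h2)

theorem teq_cons_swap {c : S} {ys : List S} (h : ∀ y ∈ ys, I c y) :
    traceEq I (c :: ys) (ys ++ [c]) := by
  induction ys with
  | nil => exact teq_refl _
  | cons y t ih =>
      have h1 : swapStep I (c :: y :: t) (y :: c :: t) :=
        ⟨[], t, c, y, h y (by simp), rfl, rfl⟩
      refine teq_trans (Relation.EqvGen.rel _ _ h1) ?_
      exact teq_cons y (ih (fun z hz => h z (by simp [hz])))

theorem teq_commute {xs ys : List S} (h : ∀ x ∈ xs, ∀ y ∈ ys, I x y) :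
    traceEq I (xs ++ ys) (ys ++ xs) := by
  induction xs with
  | nil => simp [teq_refl]
  | cons x t ih =>
      have h1 : traceEq I ((x :: ys) ++ t) ((ys ++ [x]) ++ t) :=
        teq_append_right t (teq_cons_swap (fun y hy => h x (by simp) y hy))
      have h2 : traceEq I (x :: (t ++ ys)) (x :: (ys ++ t)) :=
        teq_cons x (ih (fun z hz y hy => h z (by simp [hz]) y hy))
      have h3 : traceEq I ((x :: t) ++ ys) (x :: (ys ++ t)) := h2
      have h4 : traceEq I ((x :: ys) ++ t) (ys ++ x :: t) := by
        simpa using h1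
      exact teq_trans h3 h4

theorem mkT_eq_iff {u v : List S} : mkT I u = mkT I v ↔ traceEq I u v :=
  ⟨fun h => Quotient.exact h, fun h => Quotient.sound h⟩


variable (I) in
open Classical in
noncomputable def canc (a : S) : List S → Option (List S)
  | [] => none
  | b :: t => if b = a then some t
      else if I a b then Option.map (b :: ·) (canc a t) else none

variable (I) in
noncomputable def ins (a : S) (m : List S) : List S :=
  match canc I a m with
  | some m' => m'
  | none => a :: m

variable (I) in
noncomputable def red (w : List S) : List S := w.foldr (ins I) []

theorem canc_nil (a : S) : canc I a [] = none := rfl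

open Classical in
theorem canc_cons (a b : S) (t : List S) :
    canc I a (b :: t) = if b = a then some t
      else if I a b then Option.map (b :: ·) (canc I a t) else none := rfl

theorem canc_some_spec {a : S} {m m' : List S} (h : canc I a m = some m') :
    ∃ m1 m2, m = m1 ++ a :: m2 ∧ m' = m1 ++ m2 ∧ ∀ b ∈ m1, b ≠ a ∧ I a b := by
  induction m generalizing m' with
  | nil => simp [canc_nil] at h
  | cons b t ih =>
      rw [canc_cons] at h
      split_ifs at h with h1 h2
      · subst h1
        obtain rfl : t = m' := by simpa using h
        exact ⟨[], t, rfl, rfl, by simp⟩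
      · obtain ⟨t', ht', rfl⟩ := Option.map_eq_some_iff.mp h
        obtain ⟨m1, m2, rfl, rfl, hm1⟩ := ih ht'
        exact ⟨b :: m1, m2, rfl, rfl, by
          intro x hx
          rcases List.mem_cons.mp hx with rfl | hx
          · exact ⟨h1, h2⟩
          · exact hm1 x hx⟩

theorem canc_walk {a : S} {p : List S} (hp : ∀ b ∈ p, b ≠ a ∧ I a b) (t : List S) :
    canc I a (p ++ t) = Option.map (p ++ ·) (canc I a t) := by
  induction p with
  | nil => simp
  | cons b q ih =>
      have hb := hp b (by simp)
      rw [List.cons_append, canc_cons, if_neg hb.1, if_pos hb.2,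
        ih (fun x hx => hp x (by simp [hx]))]
      cases canc I a t <;> simp

theorem canc_of_split (hirr : ∀ a, ¬ I a a) {a : S} {m1 m2 : List S}
    (h : ∀ b ∈ m1, I a b) :
    canc I a (m1 ++ a :: m2) = some (m1 ++ m2) := by
  have hp : ∀ b ∈ m1, b ≠ a ∧ I a b := fun b hb =>
    ⟨fun hba => hirr a (hba ▸ h b hb), h b hb⟩
  rw [canc_walk hp, canc_cons, if_pos rfl]
  rfl

theorem swap_cases {m m' : List S} (h : swapStep I m m') :
    (∃ x y t, I x y ∧ m = x :: y :: t ∧ m' = y :: x :: t) ∨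
    (∃ c t t', m = c :: t ∧ m' = c :: t' ∧ swapStep I t t') := by
  obtain ⟨p, s, x, y, hI, hx, hy⟩ := h
  cases p with
  | nil => exact Or.inl ⟨x, y, s, hI, by simpa using hx, by simpa using hy⟩
  | cons c p' =>
      refine Or.inr ⟨c, p' ++ x :: y :: s, p' ++ y :: x :: s, by simpa using hx,
        by simpa using hy, ⟨p', s, x, y, hI, rfl, rfl⟩⟩

/-- A visible occurrence survives a swap step. -/
theorem vis_step {a : S} {m' m1 m2 : List S} (hsw : swapStep I (m1 ++ a :: m2) m')
    (h1 : ∀ b ∈ m1, I a b) :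
    ∃ m1' m2', m' = m1' ++ a :: m2' ∧ (∀ b ∈ m1', I a b) ∧
      traceEq I (m1 ++ m2) (m1' ++ m2') := by
  induction m1 generalizing m' m2 with
  | nil =>
      rcases swap_cases hsw with ⟨x, y, t, hI, hx, hy⟩ | ⟨c, t, t', hx, hy, hst⟩
      · simp only [List.nil_append] at hx
        injection hx with e1 e2
        subst e1; subst e2
        exact ⟨[y], t, by simpa using hy, by simpa using hI, teq_refl _⟩
      · simp only [List.nil_append] at hx
        injection hx with e1 e2
        subst e1; subst e2
        exact ⟨[], t', by simpa using hy, by simp, Relation.EqvGen.rel _ _ hst⟩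
  | cons b r ih =>
      rcases swap_cases hsw with ⟨x, y, t, hI, hx, hy⟩ | ⟨c, t, t', hx, hy, hst⟩
      · simp only [List.cons_append] at hx
        injection hx with e1 e2
        subst e1
        cases r with
        | nil =>
            simp only [List.nil_append] at e2
            injection e2 with e3 e4
            subst e3; subst e4
            exact ⟨[], b :: m2, by simpa using hy, by simp, teq_refl _⟩
        | cons z r' =>
            simp only [List.cons_append] at e2
            injection e2 with e3 e4
            subst e3; subst e4
            refine ⟨z :: b :: r', m2, by simp [hy], ?_, ?_⟩
            · intro w hw
              rcases List.mem_cons.mp hw with rfl | hw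
              · exact h1 w (by simp)
              rcases List.mem_cons.mp hw with rfl | hw
              · exact h1 w (by simp)
              · exact h1 w (by simp [hw])
            · exact Relation.EqvGen.rel _ _ ⟨[], r' ++ m2, b, z, hI, by simp, by simp⟩
      · simp only [List.cons_append] at hx
        injection hx with e1 e2
        subst e1
        have hst' : swapStep I (r ++ a :: m2) t' := by rw [e2]; exact hst
        obtain ⟨m1', m2', rfl, hgood, hteq⟩ := ih hst' (fun w hw => h1 w (by simp [hw]))
        refine ⟨b :: m1', m2', by simp [hy], ?_, teq_cons b hteq⟩
        intro w hw
        rcases List.mem_cons.mp hw with rfl | hw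
        · exact h1 w (by simp)
        · exact hgood w hw

/-- A visible occurrence survives trace equivalence. -/
theorem vis_teq (hsym : ∀ a b, I a b → I b a) {a : S} {m m' m1 m2 : List S}
    (h : traceEq I m m') (hm : m = m1 ++ a :: m2) (h1 : ∀ b ∈ m1, I a b) :
    ∃ m1' m2', m' = m1' ++ a :: m2' ∧ (∀ b ∈ m1', I a b) ∧
      traceEq I (m1 ++ m2) (m1' ++ m2') := by
  subst hm
  have h' := teq_to_rtg hsym h
  clear h
  induction h' with
  | refl => exact ⟨m1, m2, rfl, h1, teq_refl _⟩
  | tail hrtg hstep ih =>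
      obtain ⟨n1, n2, rfl, hg, ht⟩ := ih
      obtain ⟨k1, k2, rfl, hg2, ht2⟩ := vis_step hstep hg
      exact ⟨k1, k2, rfl, hg2, teq_trans ht ht2⟩

theorem ins_of_canc_some {a : S} {m m' : List S} (h : canc I a m = some m') :
    ins I a m = m' := by simp [ins, h]

theorem ins_of_canc_none {a : S} {m : List S} (h : canc I a m = none) :
    ins I a m = a :: m := by simp [ins, h]

theorem canc_none_of_no_split (hirr : ∀ a, ¬ I a a) {a : S} {m : List S}
    (h : canc I a m = none) :
    ∀ m1 m2, m = m1 ++ a :: m2 → ¬ (∀ b ∈ m1, I a b) := by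
  intro m1 m2 hm hgood
  rw [hm, canc_of_split hirr hgood] at h
  exact Option.some_ne_none _ h

/-- `ins` respects trace equivalence. -/
theorem ins_respects (hirr : ∀ a, ¬ I a a) (hsym : ∀ a b, I a b → I b a)
    {a : S} {m m' : List S} (h : traceEq I m m') :
    traceEq I (ins I a m) (ins I a m') := by
  cases hc : canc I a m with
  | some m0 =>
      obtain ⟨m1, m2, hm, hm0, hgood⟩ := canc_some_spec hc
      obtain ⟨m1', m2', hm', hgood', hteq⟩ :=
        vis_teq hsym h hm (fun b hb => (hgood b hb).2)
      rw [ins_of_canc_some hc, hm0,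
        ins_of_canc_some (hm' ▸ canc_of_split hirr hgood')]
      exact hteq
  | none =>
      have hc' : canc I a m' = none := by
        cases hc2 : canc I a m' with
        | none => rfl
        | some m0' =>
            obtain ⟨m1', m2', hm', _, hgood'⟩ := canc_some_spec hc2
            obtain ⟨m1, m2, hm, hgood, _⟩ :=
              vis_teq hsym (teq_symm h) hm' (fun b hb => (hgood' b hb).2)
            exact absurd hgood (canc_none_of_no_split hirr hc m1 m2 hm)
      rw [ins_of_canc_none hc, ins_of_canc_none hc']
      exact teq_cons a h

theorem canc_none_restrict (hirr : ∀ a, ¬ I a a) {x y : S} {m m1 m2 : List S}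
    (hxy : x ≠ y) (hIxy : I x y) (hcx : canc I x m = none)
    (hm : m = m1 ++ y :: m2) (hgood : ∀ b ∈ m1, I y b) :
    canc I x (m1 ++ m2) = none := by
  cases hc : canc I x (m1 ++ m2) with
  | none => rfl
  | some w =>
      exfalso
      obtain ⟨n1, n2, hsplit, _, hngood⟩ := canc_some_spec hc
      rcases List.append_eq_append_iff.mp hsplit with ⟨u, hn1, hm2⟩ | ⟨u, hm1, hu⟩
      · -- n1 = m1 ++ u, m2 = u ++ x :: n2
        have hmm : m = (m1 ++ y :: u) ++ x :: n2 := by rw [hm, hm2]; simp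
        have hg : ∀ b ∈ m1 ++ y :: u, I x b := by
          intro b hb
          rcases List.mem_append.mp hb with hb | hb
          · exact (hngood b (by simp [hn1, hb])).2
          · rcases List.mem_cons.mp hb with rfl | hb
            · exact hIxy
            · exact (hngood b (by simp [hn1, hb])).2
        rw [hmm, canc_of_split hirr hg] at hcx
        exact Option.some_ne_none _ hcx
      · -- m1 = n1 ++ u, x :: n2 = u ++ m2
        cases u with
        | nil =>
            simp only [List.append_nil] at hm1
            simp only [List.nil_append] at hu
            have hmm : m = m1 ++ y :: x :: n2 := by rw [hm, hu]
            have hg : ∀ b ∈ m1 ++ [y], I x b := by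
              intro b hb
              rcases List.mem_append.mp hb with hb | hb
              · exact (hngood b (hm1 ▸ hb)).2
              · simp at hb; subst hb; exact hIxy
            have h3 := canc_of_split hirr hg (m2 := n2)
            rw [show (m1 ++ [y]) ++ x :: n2 = m by rw [hmm]; simp, hcx] at h3
            exact Option.some_ne_none _ h3.symm
        | cons z u' =>
            injection hu with e1 e2
            subst e1
            have hmm : m = n1 ++ x :: (u' ++ y :: m2) := by rw [hm, hm1]; simp
            have hg : ∀ b ∈ n1, I x b := fun b hb => (hngood b hb).2
            rw [hmm, canc_of_split hirr hg] at hcx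
            exact Option.some_ne_none _ hcx

/-- `ins` for independent letters commutes. -/
theorem ins_comm (hirr : ∀ a, ¬ I a a) (hsym : ∀ a b, I a b → I b a)
    {x y : S} (hI : I x y) (m : List S) :
    traceEq I (ins I x (ins I y m)) (ins I y (ins I x m)) := by
  have hxy : x ≠ y := fun h => hirr y (h ▸ hI)
  cases hcy : canc I y m with
  | none =>
      cases hcx : canc I x m with
      | none =>
          rw [ins_of_canc_none hcy, ins_of_canc_none hcx]
          have h1 : canc I x (y :: m) = none := by
            rw [canc_cons, if_neg (Ne.symm hxy), if_pos hI, hcx]; rfl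
          have h2 : canc I y (x :: m) = none := by
            rw [canc_cons, if_neg hxy, if_pos (hsym _ _ hI), hcy]; rfl
          rw [ins_of_canc_none h1, ins_of_canc_none h2]
          exact Relation.EqvGen.rel _ _ ⟨[], m, x, y, hI, rfl, rfl⟩
      | some mx =>
          obtain ⟨k1, k2, hm, hmx, hkgood⟩ := canc_some_spec hcx
          rw [ins_of_canc_none hcy, ins_of_canc_some hcx]
          have h1 : canc I x (y :: m) = some (y :: mx) := by
            rw [canc_cons, if_neg (Ne.symm hxy), if_pos hI, hcx]; rfl
          rw [ins_of_canc_some h1]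
          have h2 : canc I y mx = none := by
            rw [hmx]
            exact canc_none_restrict hirr (Ne.symm hxy) (hsym _ _ hI) hcy hm
              (fun b hb => (hkgood b hb).2)
          rw [ins_of_canc_none h2]
          exact teq_refl _
  | some my =>
      obtain ⟨m1, m2, hm, hmy, hmgood⟩ := canc_some_spec hcy
      cases hcx : canc I x m with
      | none =>
          rw [ins_of_canc_some hcy, ins_of_canc_none hcx]
          have h1 : canc I y (x :: m) = some (x :: my) := by
            rw [canc_cons, if_neg hxy, if_pos (hsym _ _ hI), hcy]; rfl
          rw [ins_of_canc_some h1]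
          have h2 : canc I x my = none := by
            rw [hmy]
            exact canc_none_restrict hirr hxy hI hcx hm
              (fun b hb => (hmgood b hb).2)
          rw [ins_of_canc_none h2]
          exact teq_refl _
      | some mx =>
          obtain ⟨k1, k2, hmk, hmx, hkgood⟩ := canc_some_spec hcx
          have hsplit : k1 ++ x :: k2 = m1 ++ y :: m2 := by rw [← hmk, ← hm]
          rw [ins_of_canc_some hcy, ins_of_canc_some hcx, hmy, hmx]
          rcases List.append_eq_append_iff.mp hsplit with ⟨u, hm1, hu⟩ | ⟨u, hk1, hu⟩
          · -- m1 = k1 ++ u, x :: k2 = u ++ y :: m2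
            cases u with
            | nil =>
                simp only [List.nil_append] at hu
                injection hu with e1 _
                exact absurd e1 hxy
            | cons z u' =>
                injection hu with e1 e2
                subst e1
                have e2' : k2 = u' ++ y :: m2 := by simpa using e2
                have hcx2 : canc I x (m1 ++ m2) = some (k1 ++ (u' ++ m2)) := by
                  rw [hm1, show (k1 ++ x :: u') ++ m2 = k1 ++ x :: (u' ++ m2) by simp]
                  exact canc_of_split hirr (fun b hb => (hkgood b hb).2)
                have hcy2 : canc I y (k1 ++ k2) = some (k1 ++ (u' ++ m2)) := by
                  rw [e2', show k1 ++ (u' ++ y :: m2) = (k1 ++ u') ++ y :: m2 by simp]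
                  have hg : ∀ b ∈ k1 ++ u', I y b := by
                    intro b hb
                    refine (hmgood b ?_).2
                    rw [hm1]
                    rcases List.mem_append.mp hb with hb | hb
                    · simp [hb]
                    · simp [hb]
                  rw [canc_of_split hirr hg]
                  congr 1
                  simp
                rw [ins_of_canc_some hcx2, ins_of_canc_some hcy2]
                exact teq_refl _
          · -- k1 = m1 ++ u, y :: m2 = u ++ x :: k2
            cases u with
            | nil =>
                simp only [List.nil_append] at hu
                injection hu with e1 _
                exact absurd e1.symm hxy
            | cons z u' =>
                injection hu with e1 e2
                subst e1
                have e2' : m2 = u' ++ x :: k2 := by simpa using e2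
                have hcy2 : canc I y (k1 ++ k2) = some (m1 ++ (u' ++ k2)) := by
                  rw [hk1, show (m1 ++ y :: u') ++ k2 = m1 ++ y :: (u' ++ k2) by simp]
                  exact canc_of_split hirr (fun b hb => (hmgood b hb).2)
                have hcx2 : canc I x (m1 ++ m2) = some (m1 ++ (u' ++ k2)) := by
                  rw [e2', show m1 ++ (u' ++ x :: k2) = (m1 ++ u') ++ x :: k2 by simp]
                  have hg : ∀ b ∈ m1 ++ u', I x b := by
                    intro b hb
                    refine (hkgood b ?_).2
                    rw [hk1]
                    rcases List.mem_append.mp hb with hb | hb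
                    · simp [hb]
                    · simp [hb]
                  rw [canc_of_split hirr hg]
                  congr 1
                  simp
                rw [ins_of_canc_some hcx2, ins_of_canc_some hcy2]
                exact teq_refl _

variable (I) in
def HasSq (m : List S) : Prop :=
  ∃ (m1 m2 m3 : List S) (c : S), m = m1 ++ c :: m2 ++ c :: m3 ∧ ∀ b ∈ m2, I c b

theorem hasSq_cons {c : S} {t : List S} (h : HasSq I t) : HasSq I (c :: t) := by
  obtain ⟨m1, m2, m3, d, ht, hg⟩ := h
  exact ⟨c :: m1, m2, m3, d, by simp [ht], hg⟩

/-- Double cancellation up to trace equivalence, on square-free lists. -/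
theorem dblcanc (hirr : ∀ a, ¬ I a a) {c : S} {m : List S} (hns : ¬ HasSq I m) :
    traceEq I (ins I c (ins I c m)) m := by
  cases hc : canc I c m with
  | none =>
      rw [ins_of_canc_none hc]
      have h2 : canc I c (c :: m) = some m := by rw [canc_cons, if_pos rfl]
      rw [ins_of_canc_some h2]
      exact teq_refl _
  | some m0 =>
      obtain ⟨m1, m2, hm, hm0, hgood⟩ := canc_some_spec hc
      rw [ins_of_canc_some hc, hm0]
      have h2 : canc I c (m1 ++ m2) = none := by
        cases hc2 : canc I c (m1 ++ m2) with
        | none => rfl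
        | some w =>
            exfalso
            obtain ⟨n1, n2, hsplit, _, hngood⟩ := canc_some_spec hc2
            rcases List.append_eq_append_iff.mp hsplit with ⟨u, hn1, hm2⟩ | ⟨u, hm1, hu⟩
            · -- n1 = m1 ++ u, m2 = u ++ c :: n2
              refine hns ⟨m1, u, n2, c, by rw [hm, hm2]; simp, ?_⟩
              intro b hb
              exact (hngood b (by simp [hn1, hb])).2
            · -- m1 = n1 ++ u, c :: n2 = u ++ m2
              cases u with
              | nil =>
                  simp only [List.nil_append] at hu
                  refine hns ⟨m1, [], n2, c, by rw [hm, hu]; simp, by simp⟩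
              | cons z u' =>
                  injection hu with e1 e2
                  subst e1
                  -- c ∈ m1 : contradiction with hgood (b ≠ c)
                  exact (hgood c (by simp [hm1])).1 rfl
      rw [ins_of_canc_none h2]
      refine teq_trans ?_ (teq_refl _)
      have : traceEq I (([c] ++ m1) ++ m2) ((m1 ++ [c]) ++ m2) :=
        teq_append_right m2 (teq_commute (by
          intro x hx y hy
          simp at hx
          subst hx
          exact hgood y hy |>.2))
      simpa [hm] using this

/-- `ins` preserves square-freeness. -/
theorem noHasSq_ins (hirr : ∀ a, ¬ I a a) (hsym : ∀ a b, I a b → I b a)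
    {a : S} {m : List S} (hns : ¬ HasSq I m) : ¬ HasSq I (ins I a m) := by
  cases hc : canc I a m with
  | none =>
      rw [ins_of_canc_none hc]
      rintro ⟨n1, n2, n3, c, hsplit, hg⟩
      cases n1 with
      | nil =>
          simp only [List.nil_append] at hsplit
          injection hsplit with e1 e2
          subst e1
          exact canc_none_of_no_split hirr hc n2 n3 e2 hg
      | cons z n1' =>
          injection hsplit with e1 e2
          exact hns ⟨n1', n2, n3, c, e2, hg⟩
  | some m0 =>
      obtain ⟨m1, m2, hm, hm0, hgood⟩ := canc_some_spec hc
      rw [ins_of_canc_some hc, hm0]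
      rintro ⟨n1, n2, n3, c, hsplit, hg⟩
      have hsplit' : m1 ++ m2 = n1 ++ (c :: (n2 ++ c :: n3)) := by
        rw [hsplit]; simp
      rcases List.append_eq_append_iff.mp hsplit' with ⟨u, hn1, hm2⟩ | ⟨u, hm1, hu⟩
      · -- n1 = m1 ++ u, m2 = u ++ c :: (n2 ++ c :: n3)
        refine hns ⟨m1 ++ a :: u, n2, n3, c, ?_, hg⟩
        rw [hm, hm2]
        simp
      · -- m1 = n1 ++ u, c :: (n2 ++ c :: n3) = u ++ m2
        cases u with
        | nil =>
            simp only [List.nil_append] at hu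
            refine hns ⟨m1 ++ [a], n2, n3, c, ?_, hg⟩
            rw [hm, ← hu]
            simp
        | cons z u' =>
            injection hu with e1 e2
            subst e1
            have e2' : n2 ++ c :: n3 = u' ++ m2 := by simpa using e2
            rcases List.append_eq_append_iff.mp e2' with ⟨w, hu', hw⟩ | ⟨w, hn2, hm2⟩
            · -- u' = n2 ++ w, c :: n3 = w ++ m2
              cases w with
              | nil =>
                  simp only [List.nil_append] at hw
                  -- m2 = c :: n3, u' = n2, m1 = n1 ++ c :: n2
                  refine hns ⟨n1, u' ++ [a], n3, c, ?_, ?_⟩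
                  · rw [hm, hm1, ← hw]
                    simp
                  · intro b hb
                    rcases List.mem_append.mp hb with hb | hb
                    · have h5 : u' = n2 := by simpa using hu'
                      exact hg b (h5 ▸ hb)
                    · simp at hb
                      subst hb
                      exact hsym _ _ ((hgood c (by simp [hm1])).2)
              | cons z' w' =>
                  injection hw with e3 e4
                  subst e3
                  -- u' = n2 ++ c :: w', n3 = ... : square inside m1
                  refine hns ⟨n1, n2, w' ++ a :: m2, c, ?_, hg⟩
                  rw [hm, hm1, hu']
                  simp
            · -- n2 = u' ++ w, m2 = w ++ c :: n3
              refine hns ⟨n1, u' ++ a :: w, n3, c, ?_, ?_⟩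
              · rw [hm, hm1, hm2]
                simp
              · intro b hb
                rcases List.mem_append.mp hb with hb | hb
                · exact hg b (by simp [hn2, hb])
                rcases List.mem_cons.mp hb with rfl | hb
                · exact hsym _ _ ((hgood c (by simp [hm1])).2)
                · exact hg b (by simp [hn2, hb])

theorem red_nil : red I ([] : List S) = [] := rfl

theorem red_cons (a : S) (w : List S) : red I (a :: w) = ins I a (red I w) := rfl

theorem red_append (x z : List S) :
    red I (x ++ z) = List.foldr (ins I) (red I z) x := by
  simp [red, List.foldr_append]

theorem red_noHasSq (hirr : ∀ a, ¬ I a a) (hsym : ∀ a b, I a b → I b a)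
    (w : List S) : ¬ HasSq I (red I w) := by
  induction w with
  | nil => rintro ⟨m1, m2, m3, c, h, -⟩; simp [red_nil] at h
  | cons a t ih => exact noHasSq_ins hirr hsym ih

theorem foldr_respects (hirr : ∀ a, ¬ I a a) (hsym : ∀ a b, I a b → I b a)
    (x : List S) {m m' : List S} (h : traceEq I m m') :
    traceEq I (List.foldr (ins I) m x) (List.foldr (ins I) m' x) := by
  induction x with
  | nil => exact h
  | cons c t ih => exact ins_respects hirr hsym ih

theorem red_respects (hirr : ∀ a, ¬ I a a) (hsym : ∀ a b, I a b → I b a)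
    {w w' : List S} (h : traceEq I w w') :
    traceEq I (red I w) (red I w') := by
  have h' := teq_to_rtg hsym h
  clear h
  induction h' with
  | refl => exact teq_refl _
  | tail hrtg hstep ih =>
      refine teq_trans ih ?_
      obtain ⟨p, s, c, d, hI, rfl, rfl⟩ := hstep
      rw [show p ++ c :: d :: s = p ++ ([c, d] ++ s) by simp,
        show p ++ d :: c :: s = p ++ ([d, c] ++ s) by simp,
        red_append, red_append, red_append, red_append]
      exact foldr_respects hirr hsym p (ins_comm hirr hsym hI (red I s))

theorem red_fix (hirr : ∀ a, ¬ I a a) {m : List S} (hns : ¬ HasSq I m) :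
    red I m = m := by
  induction m with
  | nil => rfl
  | cons a t ih =>
      have hnt : ¬ HasSq I t := fun h => hns (hasSq_cons h)
      rw [red_cons, ih hnt]
      cases hc : canc I a t with
      | none => exact ins_of_canc_none hc
      | some w =>
          exfalso
          obtain ⟨m1, m2, hm, _, hgood⟩ := canc_some_spec hc
          exact hns ⟨[], m1, m2, a, by simp [hm], fun b hb => (hgood b hb).2⟩

theorem ins_length (a : S) (m : List S) : (ins I a m).length ≤ m.length + 1 := by
  cases hc : canc I a m with
  | none => simp [ins_of_canc_none hc]
  | some w =>
      obtain ⟨m1, m2, hm, hw, -⟩ := canc_some_spec hc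
      rw [ins_of_canc_some hc, hw, hm]
      simp only [List.length_append, List.length_cons]
      omega

theorem red_length (w : List S) : (red I w).length ≤ w.length := by
  induction w with
  | nil => simp [red_nil]
  | cons a t ih =>
      rw [red_cons]
      calc (ins I a (red I t)).length ≤ (red I t).length + 1 := ins_length a _
      _ ≤ t.length + 1 := by omega
      _ = (a :: t).length := by simp

theorem mem_ins {b a : S} {m : List S} (h : b ∈ ins I a m) : b = a ∨ b ∈ m := by
  cases hc : canc I a m with
  | none => rw [ins_of_canc_none hc] at h; simpa using h
  | some w =>
      obtain ⟨m1, m2, hm, hw, -⟩ := canc_some_spec hc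
      rw [ins_of_canc_some hc, hw] at h
      right
      rw [hm]
      rcases List.mem_append.mp h with h | h
      · simp [h]
      · simp [h]

theorem mem_red {b : S} {w : List S} (h : b ∈ red I w) : b ∈ w := by
  induction w with
  | nil => simpa [red_nil] using h
  | cons a t ih =>
      rw [red_cons] at h
      rcases mem_ins h with rfl | h
      · simp
      · simp [ih h]

theorem count_ins (a b : S) (m : List S) :
    (ins I a m).count b ≤ m.count b + (if a = b then 1 else 0) := by
  cases hc : canc I a m with
  | none =>
      rw [ins_of_canc_none hc]
      simp only [List.count_cons]
      split_ifs with h1 h2 h3 <;> simp_all <;> omega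
  | some w =>
      obtain ⟨m1, m2, hm, hw, -⟩ := canc_some_spec hc
      rw [ins_of_canc_some hc, hw, hm]
      simp only [List.count_append, List.count_cons]
      split_ifs <;> omega

theorem count_red (b : S) (w : List S) : (red I w).count b ≤ w.count b := by
  induction w with
  | nil => simp [red_nil]
  | cons a t ih =>
      rw [red_cons]
      calc (ins I a (red I t)).count b ≤ (red I t).count b + (if a = b then 1 else 0) :=
        count_ins a b _
      _ ≤ t.count b + (if a = b then 1 else 0) := by omega
      _ = (a :: t).count b := by
        rw [List.count_cons]
        congr 1
        split_ifs with h1 h2 h3 <;> simp_all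

theorem rw_intro (c : S) (e f : List S) :
    RwC I (mkT I (e ++ c :: c :: f)) (mkT I (e ++ f)) :=
  ⟨c, e, f, rfl, rfl⟩

theorem mkT_congr {u v : List S} (h : traceEq I u v) : mkT I u = mkT I v :=
  mkT_eq_iff.mpr h

theorem rtg_context {X Y : Trace I} (p s : List S)
    (h : Relation.ReflTransGen (RwC I) X Y) :
    ∀ x y : List S, X = mkT I x → Y = mkT I y →
      Relation.ReflTransGen (RwC I) (mkT I (p ++ x ++ s)) (mkT I (p ++ y ++ s)) := by
  induction h using Relation.ReflTransGen.head_induction_on with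
  | refl =>
      intro x y hx hy
      have hteq : traceEq I x y := mkT_eq_iff.mp (hx ▸ hy ▸ rfl)
      rw [show mkT I (p ++ x ++ s) = mkT I (p ++ y ++ s) from
        mkT_congr (teq_append (teq_append_left p hteq) (teq_refl s))]
  | head hstep hrtg ih =>
      intro x y hx hy
      rename_i X' Z
      obtain ⟨c, e, f, hX, hZ⟩ := hstep
      have h1 : traceEq I x (e ++ c :: c :: f) := mkT_eq_iff.mp (hx ▸ hX)
      have h2 : mkT I (p ++ x ++ s) = mkT I ((p ++ e) ++ c :: c :: (f ++ s)) := by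
        refine mkT_congr (teq_trans (teq_append (teq_append_left p h1) (teq_refl s)) ?_)
        rw [show p ++ (e ++ c :: c :: f) ++ s = (p ++ e) ++ c :: c :: (f ++ s) by simp]
        exact teq_refl _
      have h3 : mkT I ((p ++ e) ++ (f ++ s)) = mkT I (p ++ (e ++ f) ++ s) := by
        refine mkT_congr ?_
        rw [show (p ++ e) ++ (f ++ s) = p ++ (e ++ f) ++ s by simp]
        exact teq_refl _
      refine Relation.ReflTransGen.head (b := mkT I (p ++ (e ++ f) ++ s)) ?_ ?_
      · rw [h2, ← h3]
        exact rw_intro c (p ++ e) (f ++ s)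
      · exact ih (e ++ f) y hZ hy

theorem red_reach (hirr : ∀ a, ¬ I a a) (w : List S) :
    Relation.ReflTransGen (RwC I) (mkT I w) (mkT I (red I w)) := by
  induction w with
  | nil => exact Relation.ReflTransGen.refl
  | cons c t ih =>
      have h1 : Relation.ReflTransGen (RwC I) (mkT I (c :: t)) (mkT I (c :: red I t)) := by
        have := rtg_context (I := I) [c] [] ih t (red I t) rfl rfl
        simpa using this
      refine h1.trans ?_
      rw [red_cons]
      cases hc : canc I c (red I t) with
      | none => rw [ins_of_canc_none hc]
      | some m0 =>
          obtain ⟨m1, m2, hm, hm0, hgood⟩ := canc_some_spec hc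
          rw [ins_of_canc_some hc, hm0]
          have h2 : mkT I (c :: red I t) = mkT I (m1 ++ c :: c :: m2) := by
            refine mkT_congr ?_
            rw [hm]
            have := teq_append_right (c :: m2)
              (teq_cons_swap (c := c) (ys := m1) (fun b hb => (hgood b hb).2))
            simpa using this
          rw [h2]
          exact Relation.ReflTransGen.single (rw_intro c m1 m2)

theorem red_rw_teq (hirr : ∀ a, ¬ I a a) (hsym : ∀ a b, I a b → I b a)
    {X Y : Trace I} (h : Relation.ReflTransGen (RwC I) X Y) :
    ∀ x y : List S, X = mkT I x → Y = mkT I y → traceEq I (red I x) (red I y) := by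
  induction h using Relation.ReflTransGen.head_induction_on with
  | refl =>
      intro x y hx hy
      exact red_respects hirr hsym (mkT_eq_iff.mp (hx ▸ hy ▸ rfl))
  | head hstep hrtg ih =>
      intro x y hx hy
      obtain ⟨c, e, f, hX, hZ⟩ := hstep
      have h1 : traceEq I (red I x) (red I (e ++ c :: c :: f)) :=
        red_respects hirr hsym (mkT_eq_iff.mp (hx ▸ hX))
      have h2 : traceEq I (red I (e ++ c :: c :: f)) (red I (e ++ f)) := by
        have e1 : red I (e ++ c :: c :: f)
            = List.foldr (ins I) (ins I c (ins I c (red I f))) e := by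
          rw [show e ++ c :: c :: f = e ++ ([c, c] ++ f) by simp, red_append]
          rfl
        have e2 : red I (e ++ f) = List.foldr (ins I) (red I f) e := red_append e f
        rw [e1, e2]
        exact foldr_respects hirr hsym e (dblcanc hirr (red_noHasSq hirr hsym f))
      exact teq_trans (teq_trans h1 h2) (ih (e ++ f) y hZ hy)

theorem irr_rtg_eq {X Y : Trace I} (hirr : IrrC I X)
    (h : Relation.ReflTransGen (RwC I) X Y) : X = Y := by
  rcases Relation.ReflTransGen.cases_head h with rfl | ⟨Z, hZ, -⟩
  · rfl
  · exact absurd hZ (hirr Z)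

theorem teq_length {u v : List S} (h : traceEq I u v) : u.length = v.length :=
  (teq_perm h).length_eq

theorem irr_red (hirr : ∀ a, ¬ I a a) (hsym : ∀ a b, I a b → I b a) (w : List S) :
    IrrC I (mkT I (red I w)) := by
  intro Y hY
  obtain ⟨c, e, f, hX, hZ⟩ := hY
  have h1 : traceEq I (red I w) (e ++ c :: c :: f) := mkT_eq_iff.mp hX
  have h2 : traceEq I (red I (red I w)) (red I (e ++ c :: c :: f)) :=
    red_respects hirr hsym h1
  rw [red_fix hirr (red_noHasSq hirr hsym w)] at h2
  have h3 : traceEq I (red I (e ++ c :: c :: f)) (red I (e ++ f)) := by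
    have e1 : red I (e ++ c :: c :: f)
        = List.foldr (ins I) (ins I c (ins I c (red I f))) e := by
      rw [show e ++ c :: c :: f = e ++ ([c, c] ++ f) by simp, red_append]
      rfl
    have e2 : red I (e ++ f) = List.foldr (ins I) (red I f) e := red_append e f
    rw [e1, e2]
    exact foldr_respects hirr hsym e (dblcanc hirr (red_noHasSq hirr hsym f))
  have l1 : (red I w).length = e.length + (f.length + 1 + 1) := by
    simpa using teq_length h1
  have l2 : (red I w).length = (red I (e ++ f)).length :=
    teq_length (teq_trans h2 h3)
  have l3 : (red I (e ++ f)).length ≤ e.length + f.length := by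
    have := red_length (I := I) (e ++ f)
    simpa using this
  omega

/-- `w · w⁻¹` cancels in front of anything. -/
theorem red_inv_front (hirr : ∀ a, ¬ I a a) (hsym : ∀ a b, I a b → I b a)
    (w z : List S) : traceEq I (red I (w ++ (w.reverse ++ z))) (red I z) := by
  induction w generalizing z with
  | nil => simpa using teq_refl (red I z)
  | cons c w' ih =>
      have e0 : (c :: w') ++ ((c :: w').reverse ++ z) = c :: (w' ++ (w'.reverse ++ (c :: z))) := by
        simp
      rw [e0, red_cons]
      have h1 : traceEq I (ins I c (red I (w' ++ (w'.reverse ++ (c :: z)))))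
          (ins I c (red I (c :: z))) :=
        ins_respects hirr hsym (ih (c :: z))
      refine teq_trans h1 ?_
      rw [red_cons]
      exact dblcanc hirr (red_noHasSq hirr hsym z)

/-- `w · w⁻¹` cancels at the end of anything. -/
theorem red_inv_back (hirr : ∀ a, ¬ I a a) (hsym : ∀ a b, I a b → I b a)
    (x w : List S) : traceEq I (red I (x ++ (w ++ w.reverse))) (red I x) := by
  rw [red_append]
  have h1 : traceEq I (red I (w ++ w.reverse)) (red I []) := by
    have := red_inv_front hirr hsym w ([] : List S)
    simpa using this
  have h2 : traceEq I (List.foldr (ins I) (red I (w ++ w.reverse)) x)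
      (List.foldr (ins I) (red I []) x) := foldr_respects hirr hsym x h1
  refine teq_trans h2 ?_
  rw [show List.foldr (ins I) (red I []) x = red I x from rfl]
  exact teq_refl _

/-- Levi's lemma for traces. -/
theorem levi (hirr : ∀ a, ¬ I a a) (hsym : ∀ a b, I a b → I b a)
    (g : List S) : ∀ h e f : List S, traceEq I (g ++ h) (e ++ f) →
    ∃ e1 e2 f1 f2 : List S, traceEq I e (e1 ++ e2) ∧ traceEq I f (f1 ++ f2) ∧
      traceEq I g (e1 ++ f1) ∧ traceEq I h (e2 ++ f2) ∧
      ∀ x ∈ e2, ∀ y ∈ f1, I x y := by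
  induction g with
  | nil =>
      intro h e f hteq
      exact ⟨[], e, [], f, by simpa using teq_refl e, by simpa using teq_refl f,
        teq_refl [], by simpa using hteq, by simp⟩
  | cons c g' ih =>
      intro h e f hteq
      have hteq' : traceEq I ([] ++ c :: (g' ++ h)) (e ++ f) := by simpa using hteq
      obtain ⟨m1, m2, hef, hgood, hrest⟩ :=
        vis_teq hsym hteq' rfl (by simp)
      rcases List.append_eq_append_iff.mp hef with ⟨u, hm1, hu⟩ | ⟨u, he, hu⟩
      · -- m1 = e ++ u, f = u ++ c :: m2   (c inside f)
        have hrest' : traceEq I (g' ++ h) (e ++ (u ++ m2)) := by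
          rw [show e ++ (u ++ m2) = (e ++ u) ++ m2 by simp, ← hm1]
          simpa using hrest
        obtain ⟨e1, e2, f1, f2, he', hf', hg', hh', hind⟩ := ih h e (u ++ m2) hrest'
        refine ⟨e1, e2, c :: f1, f2, he', ?_, ?_, hh', ?_⟩
        · -- f = u ++ c :: m2 ~ c :: (u ++ m2) ~ c :: (f1 ++ f2)
          have t1 : traceEq I (u ++ c :: m2) ((u ++ [c]) ++ m2) := by
            rw [show (u ++ [c]) ++ m2 = u ++ c :: m2 by simp]; exact teq_refl _
          have t2 : traceEq I ((u ++ [c]) ++ m2) (([c] ++ u) ++ m2) :=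
            teq_append_right m2 (teq_symm (teq_cons_swap (fun b hb => hgood b (by
              rw [hm1]
              simp only [List.append_eq] at hb
              simp at hb ⊢
              exact Or.inr hb))))
          have t3 : traceEq I (c :: (u ++ m2)) (c :: (f1 ++ f2)) := teq_cons c hf'
          rw [hu]
          refine teq_trans t1 (teq_trans t2 ?_)
          simpa using t3
        · -- g = c :: g' ~ c :: (e1 ++ f1) ~ e1 ++ c :: f1
          have t1 : traceEq I (c :: g') (c :: (e1 ++ f1)) := teq_cons c hg'
          have halphe : ∀ x ∈ e1, I c x := by
            intro x hx
            have hxe : x ∈ e := (teq_perm he').mem_iff.mpr (by simp [hx])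
            exact hgood x (by simp [hm1, hxe])
          have t2 : traceEq I (([c] ++ e1) ++ f1) ((e1 ++ [c]) ++ f1) :=
            teq_append_right f1 (teq_cons_swap halphe)
          refine teq_trans t1 ?_
          have := teq_trans (show traceEq I (c :: (e1 ++ f1)) (([c] ++ e1) ++ f1) by
            simpa using teq_refl (c :: (e1 ++ f1))) t2
          refine teq_trans this ?_
          rw [show (e1 ++ [c]) ++ f1 = e1 ++ (c :: f1) by simp]
          exact teq_refl _
        · -- independence : e2 × (c :: f1)
          intro x hx y hy
          rcases List.mem_cons.mp hy with rfl | hy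
          · have hxe : x ∈ e := (teq_perm he').mem_iff.mpr (by simp [hx])
            exact hsym _ _ (hgood x (by simp [hm1, hxe]))
          · exact hind x hx y hy
      · -- e = m1 ++ u, c :: m2 = u ++ f   (c inside e, or at boundary)
        cases u with
        | nil =>
            -- e = m1, f = c :: m2 : c at the head of f
            simp only [List.append_nil] at he
            simp only [List.nil_append] at hu
            have hrest' : traceEq I (g' ++ h) (e ++ m2) := by
              rw [← he] at hrest
              simpa using hrest
            obtain ⟨e1, e2, f1, f2, he', hf', hg', hh', hind⟩ := ih h e m2 hrest'
            refine ⟨e1, e2, c :: f1, f2, he', ?_, ?_, hh', ?_⟩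
            · rw [← hu]
              exact teq_cons c hf'
            · have t1 : traceEq I (c :: g') (c :: (e1 ++ f1)) := teq_cons c hg'
              have halphe : ∀ x ∈ e1, I c x := by
                intro x hx
                have hxe : x ∈ e := (teq_perm he').mem_iff.mpr (by simp [hx])
                exact hgood x (he ▸ hxe)
              have t2 : traceEq I (([c] ++ e1) ++ f1) ((e1 ++ [c]) ++ f1) :=
                teq_append_right f1 (teq_cons_swap halphe)
              refine teq_trans t1 (teq_trans (by simpa using teq_refl (c :: (e1 ++ f1))) ?_)
              refine teq_trans t2 ?_
              rw [show (e1 ++ [c]) ++ f1 = e1 ++ (c :: f1) by simp]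
              exact teq_refl _
            · intro x hx y hy
              rcases List.mem_cons.mp hy with rfl | hy
              · have hxe : x ∈ e := (teq_perm he').mem_iff.mpr (by simp [hx])
                exact hsym _ _ (hgood x (he ▸ hxe))
              · exact hind x hx y hy
        | cons z u' =>
            injection hu with e1eq e2eq
            subst e1eq
            have e2eq' : m2 = u' ++ f := by simpa using e2eq
            -- e = m1 ++ c :: u', m2 = u' ++ f
            have hrest' : traceEq I (g' ++ h) ((m1 ++ u') ++ f) := by
              rw [show (m1 ++ u') ++ f = m1 ++ (u' ++ f) by simp, ← e2eq']
              exact hrest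
            obtain ⟨e1, e2, f1, f2, he', hf', hg', hh', hind⟩ := ih h (m1 ++ u') f hrest'
            refine ⟨c :: e1, e2, f1, f2, ?_, hf', ?_, hh', hind⟩
            · -- e = m1 ++ c :: u' ~ c :: (m1 ++ u') ~ c :: (e1 ++ e2)
              have t2 : traceEq I ((m1 ++ [c]) ++ u') (([c] ++ m1) ++ u') :=
                teq_append_right u' (teq_symm (teq_cons_swap (fun b hb => hgood b hb)))
              have t3 : traceEq I (c :: (m1 ++ u')) (c :: (e1 ++ e2)) := teq_cons c he'
              rw [he, show m1 ++ c :: u' = (m1 ++ [c]) ++ u' by simp]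
              refine teq_trans t2 ?_
              refine teq_trans (show traceEq I (([c] ++ m1) ++ u') (c :: (m1 ++ u')) by
                simpa using teq_refl (c :: (m1 ++ u'))) ?_
              simpa using t3
            · exact teq_cons c hg'

theorem teq_mem {b : S} {u v : List S} (h : traceEq I u v) : b ∈ u ↔ b ∈ v :=
  (teq_perm h).mem_iff

theorem red_insert_mid (hirr : ∀ a, ¬ I a a) (hsym : ∀ a b, I a b → I b a)
    (p v s : List S) :
    traceEq I (red I (p ++ v ++ s)) (red I (p ++ red I v ++ s)) :=
  red_rw_teq hirr hsym (rtg_context p s (red_reach hirr v) v (red I v) rfl rfl) _ _ rfl rfl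

theorem teq_singleton {a : S} {x y : List S} (h : traceEq I [a] (x ++ y)) :
    (x = [a] ∧ y = []) ∨ (x = [] ∧ y = [a]) := by
  have hp : x ++ y = [a] := List.perm_singleton.mp (teq_perm h).symm
  cases x with
  | nil => exact Or.inr ⟨rfl, by simpa using hp⟩
  | cons z t =>
      left
      injection hp with e1 e2
      subst e1
      have := List.append_eq_nil_iff.mp e2
      exact ⟨by rw [this.1], this.2⟩

variable (I) in
def BadW (a : S) (u : List S) : Prop :=
  ∃ p v s : List S, mkT I u = mkT I (p ++ a :: (v ++ a :: s)) ∧ ∀ b ∈ red I v, I a b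

/-- A bad factor survives backwards across one rewrite step. -/
theorem bad_step (hirr : ∀ a, ¬ I a a) (hsym : ∀ a b, I a b → I b a)
    {a c : S} {e f : List S} (h : BadW I a (e ++ f)) : BadW I a (e ++ c :: c :: f) := by
  obtain ⟨p, v, s, hu, hv⟩ := h
  have hteq : traceEq I (p ++ a :: (v ++ a :: s)) (e ++ f) := teq_symm (mkT_eq_iff.mp hu)
  obtain ⟨e1, e2, f1, f2, hE1, hF1, hP, hH1, ind1⟩ := levi hirr hsym p _ e f hteq
  obtain ⟨e3, e4, f3, f4, hE2, hF2, hA1, hH2, ind2⟩ := levi hirr hsym [a] (v ++ a :: s) e2 f2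
    (by simpa using hH1)
  obtain ⟨e5, e6, f5, f6, hE3, hF3, hV, hH3, ind3⟩ := levi hirr hsym v (a :: s) e4 f4 hH2
  obtain ⟨e7, e8, f7, f8, hE4, hF4, hA2, hS, ind4⟩ := levi hirr hsym [a] s e6 f6
    (by simpa using hH3)
  -- memberships
  have meme5e4 : ∀ x ∈ e5, x ∈ e4 := fun x hx => (teq_mem hE3).mpr (by simp [hx])
  have meme6e4 : ∀ x ∈ e6, x ∈ e4 := fun x hx => (teq_mem hE3).mpr (by simp [hx])
  have meme8e6 : ∀ x ∈ e8, x ∈ e6 := fun x hx => (teq_mem hE4).mpr (by simp [hx])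
  have meme4e2 : ∀ x ∈ e4, x ∈ e2 := fun x hx => (teq_mem hE2).mpr (by simp [hx])
  have memf5f4 : ∀ x ∈ f5, x ∈ f4 := fun x hx => (teq_mem hF3).mpr (by simp [hx])
  have memf4f2 : ∀ x ∈ f4, x ∈ f2 := fun x hx => (teq_mem hF2).mpr (by simp [hx])
  rcases teq_singleton hA1 with ⟨he3, hf3⟩ | ⟨he3, hf3⟩ <;>
    rcases teq_singleton hA2 with ⟨he7, hf7⟩ | ⟨he7, hf7⟩
  · -- Case A : e3 = [a], e7 = [a]
    have he6A : traceEq I e6 (a :: e8) := by rw [he7] at hE4; simpa using hE4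
    have t4 : traceEq I e4 (e5 ++ (a :: e8)) := teq_trans hE3 (teq_append_left e5 he6A)
    have t2 : traceEq I e2 (a :: e4) := by rw [he3] at hE2; simpa using hE2
    have hE : traceEq I e (e1 ++ (a :: (e5 ++ (a :: e8)))) :=
      teq_trans hE1 (teq_append_left e1 (teq_trans t2 (teq_cons a t4)))
    have tf2 : traceEq I f2 f4 := by rw [hf3] at hF2; simpa using hF2
    have tf6 : traceEq I f6 f8 := by rw [hf7] at hF4; simpa using hF4
    have hF : traceEq I f (f1 ++ (f5 ++ f8)) :=
      teq_trans hF1 (teq_append_left f1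
        (teq_trans tf2 (teq_trans hF3 (teq_append_left f5 tf6))))
    have hall : traceEq I (e ++ c :: c :: f)
        ((e1 ++ (a :: (e5 ++ (a :: e8)))) ++ (c :: c :: (f1 ++ (f5 ++ f8)))) :=
      teq_append hE (teq_cons c (teq_cons c hF))
    refine ⟨e1, e5, e8 ++ (c :: c :: (f1 ++ (f5 ++ f8))), ?_, ?_⟩
    · refine mkT_congr ?_
      rw [show e1 ++ a :: (e5 ++ a :: (e8 ++ (c :: c :: (f1 ++ (f5 ++ f8)))))
        = (e1 ++ (a :: (e5 ++ (a :: e8)))) ++ (c :: c :: (f1 ++ (f5 ++ f8))) by simp]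
      exact hall
    · -- red e5 ⊆ I(a)
      have c1 : traceEq I (red I e5) (red I (e5 ++ (f5 ++ f5.reverse))) :=
        teq_symm (red_inv_back hirr hsym e5 f5)
      have c2 : traceEq I (red I (e5 ++ (f5 ++ f5.reverse))) (red I (v ++ f5.reverse)) := by
        refine red_respects hirr hsym ?_
        rw [show e5 ++ (f5 ++ f5.reverse) = (e5 ++ f5) ++ f5.reverse by simp]
        exact teq_append_right f5.reverse (teq_symm hV)
      have c3 : traceEq I (red I (v ++ f5.reverse)) (red I (red I v ++ f5.reverse)) := by
        have := red_insert_mid hirr hsym [] v f5.reverse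
        simpa using this
      have call := teq_trans c1 (teq_trans c2 c3)
      intro b hb
      have hb2 : b ∈ red I (red I v ++ f5.reverse) := (teq_mem call).mp hb
      have hb3 : b ∈ red I v ++ f5.reverse := mem_red hb2
      rcases List.mem_append.mp hb3 with hb4 | hb4
      · exact hv b hb4
      · have ha6 : a ∈ e6 := (teq_mem hE4).mpr (by simp [he7])
        exact ind3 a ha6 b (by simpa using hb4)
  · -- Case B : e3 = [a], f7 = [a]
    have he6B : traceEq I e6 e8 := by rw [he7] at hE4; simpa using hE4
    have t2 : traceEq I e2 (a :: e4) := by rw [he3] at hE2; simpa using hE2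
    have hE : traceEq I e (e1 ++ (a :: (e5 ++ e8))) :=
      teq_trans hE1 (teq_append_left e1 (teq_trans t2 (teq_cons a
        (teq_trans hE3 (teq_append_left e5 he6B)))))
    have tf2 : traceEq I f2 f4 := by rw [hf3] at hF2; simpa using hF2
    have tf6 : traceEq I f6 (a :: f8) := by rw [hf7] at hF4; simpa using hF4
    have hF : traceEq I f (f1 ++ (f5 ++ (a :: f8))) :=
      teq_trans hF1 (teq_append_left f1
        (teq_trans tf2 (teq_trans hF3 (teq_append_left f5 tf6))))
    have hall : traceEq I (e ++ c :: c :: f)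
        ((e1 ++ (a :: (e5 ++ e8))) ++ (c :: c :: (f1 ++ (f5 ++ (a :: f8))))) :=
      teq_append hE (teq_cons c (teq_cons c hF))
    refine ⟨e1, (e5 ++ e8) ++ (c :: c :: (f1 ++ f5)), f8, ?_, ?_⟩
    · refine mkT_congr ?_
      rw [show e1 ++ a :: (((e5 ++ e8) ++ (c :: c :: (f1 ++ f5))) ++ a :: f8)
        = (e1 ++ (a :: (e5 ++ e8))) ++ (c :: c :: (f1 ++ (f5 ++ (a :: f8)))) by simp]
      exact hall
    · -- red ((e5++e8) ++ c::c::(f1++f5)) ⊆ I(a)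
      have ha2 : a ∈ e2 := (teq_mem hE2).mpr (by simp [he3])
      have hmm : ∀ x ∈ e5 ++ e8, x ∈ e2 := by
        intro x hx
        rcases List.mem_append.mp hx with hx | hx
        · exact meme4e2 x (meme5e4 x hx)
        · exact meme4e2 x (meme6e4 x (meme8e6 x hx))
      have s2 : traceEq I (red I ((e5 ++ e8) ++ (c :: c :: (f1 ++ f5))))
          (red I ((e5 ++ e8) ++ (f1 ++ f5))) :=
        red_rw_teq hirr hsym
          (Relation.ReflTransGen.single (rw_intro c (e5 ++ e8) (f1 ++ f5))) _ _ rfl rfl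
      have s3 : traceEq I ((e5 ++ e8) ++ (f1 ++ f5)) (f1 ++ ((e5 ++ f5) ++ e8)) := by
        have u1 : traceEq I ((e5 ++ e8) ++ f1) (f1 ++ (e5 ++ e8)) :=
          teq_commute (fun x hx y hy => ind1 x (hmm x hx) y hy)
        have u2 : traceEq I (((e5 ++ e8) ++ f1) ++ f5) ((f1 ++ (e5 ++ e8)) ++ f5) :=
          teq_append_right f5 u1
        have u3 : traceEq I (e8 ++ f5) (f5 ++ e8) :=
          teq_commute (fun x hx y hy => ind3 x (meme8e6 x hx) y hy)
        have u4 : traceEq I (f1 ++ (e5 ++ (e8 ++ f5))) (f1 ++ (e5 ++ (f5 ++ e8))) :=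
          teq_append_left f1 (teq_append_left e5 u3)
        have w1 : traceEq I ((e5 ++ e8) ++ (f1 ++ f5)) ((f1 ++ (e5 ++ e8)) ++ f5) := by
          rw [show (e5 ++ e8) ++ (f1 ++ f5) = ((e5 ++ e8) ++ f1) ++ f5 by simp]
          exact u2
        refine teq_trans w1 ?_
        rw [show (f1 ++ (e5 ++ e8)) ++ f5 = f1 ++ (e5 ++ (e8 ++ f5)) by simp,
          show f1 ++ ((e5 ++ f5) ++ e8) = f1 ++ (e5 ++ (f5 ++ e8)) by simp]
        exact u4
      have s4 : traceEq I (f1 ++ ((e5 ++ f5) ++ e8)) (f1 ++ (v ++ e8)) :=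
        teq_append_left f1 (teq_append_right e8 (teq_symm hV))
      have s5 : traceEq I (red I (f1 ++ (v ++ e8))) (red I (f1 ++ (red I v ++ e8))) := by
        have := red_insert_mid hirr hsym f1 v e8
        rw [show f1 ++ v ++ e8 = f1 ++ (v ++ e8) by simp,
          show f1 ++ red I v ++ e8 = f1 ++ (red I v ++ e8) by simp] at this
        exact this
      have call := teq_trans s2 (teq_trans (red_respects hirr hsym (teq_trans s3 s4)) s5)
      intro b hb
      have hb2 : b ∈ f1 ++ (red I v ++ e8) := mem_red ((teq_mem call).mp hb)
      rcases List.mem_append.mp hb2 with hb3 | hb3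
      · exact ind1 a ha2 b hb3
      rcases List.mem_append.mp hb3 with hb4 | hb4
      · exact hv b hb4
      · exact hsym _ _ (ind4 b hb4 a (by simp [hf7]))
  · -- Case C : f3 = [a], e7 = [a] : impossible
    exfalso
    have ha4 : a ∈ e4 := meme6e4 a ((teq_mem hE4).mpr (by simp [he7]))
    exact hirr a (ind2 a ha4 a (by simp [hf3]))
  · -- Case D : f3 = [a], f7 = [a]
    have te2 : traceEq I e2 e4 := by rw [he3] at hE2; simpa using hE2
    have te6 : traceEq I e6 e8 := by rw [he7] at hE4; simpa using hE4
    have hE : traceEq I e (e1 ++ (e5 ++ e8)) :=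
      teq_trans hE1 (teq_append_left e1 (teq_trans te2
        (teq_trans hE3 (teq_append_left e5 te6))))
    have tf2 : traceEq I f2 (a :: f4) := by rw [hf3] at hF2; simpa using hF2
    have tf6 : traceEq I f6 (a :: f8) := by rw [hf7] at hF4; simpa using hF4
    have hF : traceEq I f (f1 ++ (a :: (f5 ++ (a :: f8)))) :=
      teq_trans hF1 (teq_append_left f1 (teq_trans tf2 (teq_cons a
        (teq_trans hF3 (teq_append_left f5 tf6)))))
    have hall : traceEq I (e ++ c :: c :: f)
        ((e1 ++ (e5 ++ e8)) ++ (c :: c :: (f1 ++ (a :: (f5 ++ (a :: f8)))))) :=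
      teq_append hE (teq_cons c (teq_cons c hF))
    refine ⟨e1 ++ (e5 ++ (e8 ++ (c :: c :: f1))), f5, f8, ?_, ?_⟩
    · refine mkT_congr ?_
      rw [show (e1 ++ (e5 ++ (e8 ++ (c :: c :: f1)))) ++ a :: (f5 ++ a :: f8)
        = (e1 ++ (e5 ++ e8)) ++ (c :: c :: (f1 ++ (a :: (f5 ++ (a :: f8))))) by simp]
      exact hall
    · -- red f5 ⊆ I(a)
      have c1 : traceEq I (red I f5)
          (red I (e5.reverse ++ (e5.reverse.reverse ++ f5))) :=
        teq_symm (red_inv_front hirr hsym e5.reverse f5)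
      rw [List.reverse_reverse] at c1
      have c2 : traceEq I (red I (e5.reverse ++ (e5 ++ f5)))
          (red I (e5.reverse ++ v)) :=
        red_respects hirr hsym (teq_append_left e5.reverse (teq_symm hV))
      have c3 : traceEq I (red I (e5.reverse ++ v)) (red I (e5.reverse ++ red I v)) := by
        have := red_insert_mid hirr hsym e5.reverse v []
        rw [show e5.reverse ++ v ++ [] = e5.reverse ++ v by simp,
          show e5.reverse ++ red I v ++ [] = e5.reverse ++ red I v by simp] at this
        exact this
      have call := teq_trans c1 (teq_trans c2 c3)
      intro b hb
      have hb2 : b ∈ e5.reverse ++ red I v := mem_red ((teq_mem call).mp hb)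
      rcases List.mem_append.mp hb2 with hb3 | hb3
      · exact hsym _ _ (ind2 b (meme5e4 b (by simpa using hb3)) a (by simp [hf3]))
      · exact hv b hb3

theorem teq_count (b : S) {u v : List S} (h : traceEq I u v) :
    u.count b = v.count b := (teq_perm h).count_eq b

theorem inner_iff (hirr : ∀ a, ¬ I a a) (hsym : ∀ a b, I a b → I b a)
    (v : List S) (a : S) :
    (∀ n : List S, IrrC I (mkT I n) → Relation.ReflTransGen (RwC I) (mkT I v) (mkT I n) →
      ∀ b ∈ n, I a b) ↔ (∀ b ∈ red I v, I a b) := by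
  constructor
  · intro h
    exact h (red I v) (irr_red hirr hsym v) (red_reach hirr v)
  · intro h n hirrN hreach b hb
    have t1 : traceEq I (red I v) (red I n) := red_rw_teq hirr hsym hreach v n rfl rfl
    have t2 : traceEq I n (red I n) :=
      mkT_eq_iff.mp (irr_rtg_eq hirrN (red_reach hirr n))
    exact h b ((teq_mem t1).mpr ((teq_mem t2).mp hb))

theorem exists_bad (hirr : ∀ a, ¬ I a a) (hsym : ∀ a b, I a b → I b a)
    {a : S} {n : List S} {X : Trace I}
    (h : Relation.ReflTransGen (RwC I) X (mkT I n)) :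
    ∀ x : List S, X = mkT I x → n.count a ≠ x.count a → BadW I a x := by
  induction h using Relation.ReflTransGen.head_induction_on with
  | refl =>
      intro x hx hne
      exact absurd (teq_count a (mkT_eq_iff.mp hx.symm)) (Ne.symm hne)
  | head hstep hrtg ih =>
      intro x hx hne
      obtain ⟨c, e, f, hX, hZ⟩ := hstep
      have hxe : mkT I x = mkT I (e ++ c :: c :: f) := hx ▸ hX
      by_cases hca : c = a
      · subst hca
        exact ⟨e, [], f, by
          rw [hxe]
          exact mkT_congr (by rw [show e ++ c :: ([] ++ c :: f) = e ++ c :: c :: f by simp]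
                              exact teq_refl _), by simp [red_nil]⟩
      · have hcount : (e ++ f).count a = x.count a := by
          have h1 := teq_count a (mkT_eq_iff.mp hxe)
          simp only [List.count_append, List.count_cons] at h1 ⊢
          have : ¬ (c = a) := hca
          simp [this] at h1
          omega
        have hbad : BadW I a (e ++ f) := ih (e ++ f) hZ (by omega)
        obtain ⟨p, v, s, heq, hcond⟩ := bad_step hirr hsym (c := c) hbad
        exact ⟨p, v, s, hxe ▸ heq, hcond⟩

theorem bad_gives_drop (hirr : ∀ a, ¬ I a a) (hsym : ∀ a b, I a b → I b a)
    {a : S} {u : List S} (h : BadW I a u) :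
    ∃ n : List S, IrrC I (mkT I n) ∧ Relation.ReflTransGen (RwC I) (mkT I u) (mkT I n) ∧
      n.count a ≠ u.count a := by
  obtain ⟨p, v, s, hu, hv⟩ := h
  refine ⟨red I ((p ++ red I v) ++ s), irr_red hirr hsym _, ?_, ?_⟩
  · -- reachability
    have r1 : Relation.ReflTransGen (RwC I)
        (mkT I ((p ++ [a]) ++ v ++ (a :: s))) (mkT I ((p ++ [a]) ++ red I v ++ (a :: s))) :=
      rtg_context (p ++ [a]) (a :: s) (red_reach hirr v) v (red I v) rfl rfl
    have e1 : mkT I u = mkT I ((p ++ [a]) ++ v ++ (a :: s)) := by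
      rw [hu]
      exact mkT_congr (by rw [show (p ++ [a]) ++ v ++ (a :: s) = p ++ a :: (v ++ a :: s) by simp]
                          exact teq_refl _)
    have e2 : mkT I ((p ++ [a]) ++ red I v ++ (a :: s))
        = mkT I ((p ++ red I v) ++ a :: a :: s) := by
      refine mkT_congr ?_
      have t : traceEq I (a :: red I v) (red I v ++ [a]) := teq_cons_swap hv
      have t2 : traceEq I (p ++ ((a :: red I v) ++ (a :: s)))
          (p ++ ((red I v ++ [a]) ++ (a :: s))) :=
        teq_append_left p (teq_append_right (a :: s) t)
      rw [show (p ++ [a]) ++ red I v ++ (a :: s) = p ++ ((a :: red I v) ++ (a :: s)) by simp,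
        show (p ++ red I v) ++ a :: a :: s = p ++ ((red I v ++ [a]) ++ (a :: s)) by simp]
      exact t2
    have r2 : RwC I (mkT I ((p ++ red I v) ++ a :: a :: s)) (mkT I ((p ++ red I v) ++ s)) :=
      rw_intro a (p ++ red I v) s
    have r3 : Relation.ReflTransGen (RwC I) (mkT I ((p ++ red I v) ++ s))
        (mkT I (red I ((p ++ red I v) ++ s))) := red_reach hirr _
    rw [e1]
    refine Relation.ReflTransGen.trans r1 ?_
    rw [e2]
    exact Relation.ReflTransGen.trans (Relation.ReflTransGen.single r2) r3
  · -- counting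
    have hnotin : (red I v).count a = 0 := by
      rw [List.count_eq_zero]
      intro hmem
      exact hirr a (hv a hmem)
    have hc1 : (red I ((p ++ red I v) ++ s)).count a ≤ ((p ++ red I v) ++ s).count a :=
      count_red a _
    have hc2 : ((p ++ red I v) ++ s).count a = p.count a + s.count a := by
      simp only [List.count_append]
      omega
    have hc3 : u.count a = p.count a + (v.count a + (s.count a + 1) + 1) := by
      simpa [List.count_append, List.count_cons] using teq_count a (mkT_eq_iff.mp hu)
    omega

end AShort

/-- A trace `u` is `a`-short (the rule `a² → 1` is never applied when reducing `u`,
equivalently `a` occurs equally often in `u` and in its Coxeter normal form) if and only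
if `u` has no factor `a v a` with `α̂(v) ⊆ I(a)`, i.e. such that every letter occurring in
the Coxeter normal form of `v` is independent of `a`. -/
theorem aShort_iff_no_factor {S : Type*} [DecidableEq S]
    (I : S → S → Prop) (hirr : ∀ a, ¬ I a a) (hsym : ∀ a b, I a b → I b a)
    (u : List S) (a : S) :
    (∀ n : List S, IrrC I (mkT I n) → Relation.ReflTransGen (RwC I) (mkT I u) (mkT I n) →
      n.count a = u.count a) ↔
    ¬ ∃ p v s : List S, mkT I u = mkT I (p ++ a :: (v ++ a :: s)) ∧
        ∀ n : List S, IrrC I (mkT I n) → Relation.ReflTransGen (RwC I) (mkT I v) (mkT I n) →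
          ∀ b ∈ n, I a b := by
  constructor
  · rintro hshort ⟨p, v, s, hu, hcond⟩
    have hbad : AShort.BadW I a u :=
      ⟨p, v, s, hu, (AShort.inner_iff hirr hsym v a).mp hcond⟩
    obtain ⟨n, hIrr, hreach, hne⟩ := AShort.bad_gives_drop hirr hsym hbad
    exact hne (hshort n hIrr hreach)
  · intro hnof n hIrr hreach
    by_contra hne
    obtain ⟨p, v, s, hu, hv⟩ := AShort.exists_bad hirr hsym hreach u rfl hne
    exact hnof ⟨p, v, s, hu, (AShort.inner_iff hirr hsym v a).mpr hv⟩
end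

section
/- Let C(Σ,I) be a right-angled Coxeter group with geometric representation σ: σ_a(a)=−a, σ_a(b)=b if (a,b)∈I, σ_a(b)=b+2a if (a,b)∈D, a≠b. Let wd be a Coxeter trace (no factor c²) with d∈Σ, and write wd = u d v where ud is prime (unique maximal vertex, labeled d) and (d,v)∈I. Write σ_w(d) = Σ_b λ_b b. Then λ_b ≠ 0 iff b ∈ α(ud), and λ_b > 0 for all b ∈ α(ud). -/
/-- A Coxeter trace: one containing no factor `a²`. -/
def CoxT {S : Type*} (I : S → S → Prop) (t : Trace I) : Prop :=
  ¬ ∃ (a : S) (p s : List S), t = mkT I (p ++ a :: a :: s)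

/-- A trace is prime iff its dependence graph has a unique maximal element, equivalently
it can be written as `v · a` with the last letter `a` and the trace `v` unique. -/
def PrimeT {S : Type*} (I : S → S → Prop) (t : Trace I) : Prop :=
  ∃ (a : S) (v : List S), t = mkT I (v ++ [a]) ∧
    ∀ (a' : S) (v' : List S), t = mkT I (v' ++ [a']) → a = a' ∧ mkT I v = mkT I v'

/-- The geometric representation of the right-angled Coxeter group `C(Σ, I)` on a
generator: `σ_a(a) = -a`, `σ_a(b) = b` for `(a,b) ∈ I`, and `σ_a(b) = b + 2a` for
dependent `b ≠ a`. -/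
def racSigmaGen {S : Type*} [Fintype S] [DecidableEq S]
    (I : S → S → Prop) [∀ a b : S, Decidable (I a b)] (a : S) (v : S → ℤ) : S → ℤ :=
  fun b => if b = a then
      (- v a + 2 * ∑ c ∈ Finset.univ.filter (fun c : S => c ≠ a ∧ ¬ I a c), v c)
    else v b

/-- The geometric representation of a word `w = a₁ ⋯ aₙ`: `σ_w = σ_{a₁} ∘ ⋯ ∘ σ_{aₙ}`. -/
def racSigma {S : Type*} [Fintype S] [DecidableEq S]
    (I : S → S → Prop) [∀ a b : S, Decidable (I a b)] (w : List S) : (S → ℤ) → (S → ℤ) :=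
  w.foldr (fun a f => (racSigmaGen I a) ∘ f) id

/-- The unit basis vector of a letter `d`. -/
def unitVecZ {S : Type*} [DecidableEq S] (d : S) : S → ℤ :=
  fun b => if b = d then 1 else 0

section Aux

variable {S : Type*} {I : S → S → Prop}

theorem swapStep_cons (a : S) {u v : List S} (h : swapStep I u v) :
    swapStep I (a :: u) (a :: v) := by
  obtain ⟨p, s, x, y, hxy, hu, hv⟩ := h
  exact ⟨a :: p, s, x, y, hxy, by simp [hu], by simp [hv]⟩

theorem swapStep_append (s' : List S) {u v : List S} (h : swapStep I u v) :
    swapStep I (u ++ s') (v ++ s') := by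
  obtain ⟨p, s, x, y, hxy, hu, hv⟩ := h
  exact ⟨p, s ++ s', x, y, hxy, by simp [hu], by simp [hv]⟩

theorem traceEq_cons (a : S) {u v : List S} (h : traceEq I u v) :
    traceEq I (a :: u) (a :: v) := by
  induction h with
  | rel x y h => exact Relation.EqvGen.rel _ _ (swapStep_cons a h)
  | refl x => exact Relation.EqvGen.refl _
  | symm x y _ ih => exact Relation.EqvGen.symm _ _ ih
  | trans x y z _ _ ih1 ih2 => exact Relation.EqvGen.trans _ _ _ ih1 ih2

theorem traceEq_append_right (s' : List S) {u v : List S} (h : traceEq I u v) :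
    traceEq I (u ++ s') (v ++ s') := by
  induction h with
  | rel x y h => exact Relation.EqvGen.rel _ _ (swapStep_append s' h)
  | refl x => exact Relation.EqvGen.refl _
  | symm x y _ ih => exact Relation.EqvGen.symm _ _ ih
  | trans x y z _ _ ih1 ih2 => exact Relation.EqvGen.trans _ _ _ ih1 ih2

theorem traceEq_append_left (p : List S) {u v : List S} (h : traceEq I u v) :
    traceEq I (p ++ u) (p ++ v) := by
  induction p with
  | nil => exact h
  | cons a p ih => exact traceEq_cons a ih

theorem traceEq_shift {a : S} : ∀ {s : List S}, (∀ c ∈ s, I a c) →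
    traceEq I (a :: s) (s ++ [a])
  | [], _ => Relation.EqvGen.refl _
  | c :: s, h => by
    have h1 : traceEq I (a :: c :: s) (c :: a :: s) :=
      Relation.EqvGen.rel _ _ ⟨[], s, a, c, h c (by simp), rfl, rfl⟩
    have h2 : traceEq I (c :: a :: s) (c :: (s ++ [a])) :=
      traceEq_cons c (traceEq_shift (fun x hx => h x (by simp [hx])))
    exact Relation.EqvGen.trans _ _ _ h1 h2

theorem mkT_eq_of_traceEq {u v : List S} (h : traceEq I u v) : mkT I u = mkT I v :=
  Quotient.sound h

theorem traceEq_of_mkT_eq {u v : List S} (h : mkT I u = mkT I v) : traceEq I u v :=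
  Quotient.exact h

end Aux

section Sigma

variable {S : Type*} [Fintype S] [DecidableEq S]
  (I : S → S → Prop) [∀ a b : S, Decidable (I a b)]

theorem racSigma_cons (a : S) (w : List S) :
    racSigma I (a :: w) = racSigmaGen I a ∘ racSigma I w := rfl

theorem racSigma_foldr (g : (S → ℤ) → (S → ℤ)) : ∀ (u : List S),
    u.foldr (fun a f => (racSigmaGen I a) ∘ f) g = racSigma I u ∘ g
  | [] => rfl
  | a :: u => by
    show racSigmaGen I a ∘ (u.foldr _ g) = _
    rw [racSigma_foldr g u]
    rfl

theorem racSigma_append (u v : List S) :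
    racSigma I (u ++ v) = racSigma I u ∘ racSigma I v := by
  show (u ++ v).foldr _ id = _
  rw [List.foldr_append, racSigma_foldr]
  rfl

theorem racSigmaGen_apply_ne (a : S) (f : S → ℤ) {b : S} (h : b ≠ a) :
    racSigmaGen I a f b = f b := if_neg h

theorem racSigmaGen_apply_self (a : S) (f : S → ℤ) :
    racSigmaGen I a f a =
      - f a + 2 * ∑ c ∈ Finset.univ.filter (fun c : S => c ≠ a ∧ ¬ I a c), f c :=
  if_pos rfl

theorem racSigmaGen_invol (a : S) (f : S → ℤ) :
    racSigmaGen I a (racSigmaGen I a f) = f := by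
  funext x
  by_cases hx : x = a
  · subst hx
    rw [racSigmaGen_apply_self, racSigmaGen_apply_self]
    have hsum : ∑ c ∈ Finset.univ.filter (fun c : S => c ≠ x ∧ ¬ I x c),
        racSigmaGen I x f c
        = ∑ c ∈ Finset.univ.filter (fun c : S => c ≠ x ∧ ¬ I x c), f c := by
      apply Finset.sum_congr rfl
      intro c hc
      rw [Finset.mem_filter] at hc
      exact racSigmaGen_apply_ne I x f hc.2.1
    rw [hsum]; ring
  · rw [racSigmaGen_apply_ne I a _ hx, racSigmaGen_apply_ne I a _ hx]

theorem racSigmaGen_comm (hsym : ∀ a b, I a b → I b a) {a b : S} (hI : I a b)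
    (hne : a ≠ b) (f : S → ℤ) :
    racSigmaGen I a (racSigmaGen I b f) = racSigmaGen I b (racSigmaGen I a f) := by
  have key : ∀ (x y : S), I x y → x ≠ y → ∀ g : S → ℤ,
      racSigmaGen I x (racSigmaGen I y g) x = racSigmaGen I x g x := by
    intro x y hxy hxyne g
    rw [racSigmaGen_apply_self, racSigmaGen_apply_self,
      racSigmaGen_apply_ne I y g hxyne]
    congr 1
    congr 1
    apply Finset.sum_congr rfl
    intro c hc
    rw [Finset.mem_filter] at hc
    have : c ≠ y := by
      rintro rfl
      exact hc.2.2 hxy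
    exact racSigmaGen_apply_ne I y g this
  funext x
  by_cases hxa : x = a
  · subst hxa
    rw [key x b hI hne f, racSigmaGen_apply_ne I b _ hne]
  · by_cases hxb : x = b
    · subst hxb
      rw [key x a (hsym a x hI) (Ne.symm hne) f, racSigmaGen_apply_ne I a _ (Ne.symm hne)]
    · rw [racSigmaGen_apply_ne I a _ hxa, racSigmaGen_apply_ne I b _ hxb,
        racSigmaGen_apply_ne I b _ hxb, racSigmaGen_apply_ne I a _ hxa]

theorem racSigma_traceEq (hsym : ∀ a b, I a b → I b a) {u v : List S}
    (h : traceEq I u v) : racSigma I u = racSigma I v := by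
  induction h with
  | rel x y h =>
    obtain ⟨p, s, a, b, hab, hx, hy⟩ := h
    subst hx; subst hy
    by_cases hne : a = b
    · subst hne; rfl
    · rw [racSigma_append, racSigma_append, racSigma_cons, racSigma_cons,
        racSigma_cons, racSigma_cons]
      have : racSigmaGen I a ∘ (racSigmaGen I b ∘ racSigma I s)
          = racSigmaGen I b ∘ (racSigmaGen I a ∘ racSigma I s) := by
        funext f
        exact racSigmaGen_comm I hsym hab hne (racSigma I s f)
      rw [this]
  | refl x => rfl
  | symm x y _ ih => exact ih.symm
  | trans x y z _ _ ih1 ih2 => exact ih1.trans ih2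

theorem racSigmaGen_fix_unit (hirr : ∀ a, ¬ I a a) (hsym : ∀ a b, I a b → I b a)
    {d c : S} (h : I d c) : racSigmaGen I c (unitVecZ d) = unitVecZ d := by
  have hcd : c ≠ d := by intro hh; rw [hh] at h; exact hirr d h
  funext x
  by_cases hx : x = c
  · subst hx
    rw [racSigmaGen_apply_self]
    have h1 : unitVecZ d x = 0 := if_neg hcd
    have h2 : ∑ e ∈ Finset.univ.filter (fun e : S => e ≠ x ∧ ¬ I x e),
        unitVecZ d e = 0 := by
      apply Finset.sum_eq_zero
      intro e he
      rw [Finset.mem_filter] at he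
      have : e ≠ d := by
        intro hh
        rw [hh] at he
        exact he.2.2 (hsym d x h)
      exact if_neg this
    rw [h1, h2]; ring
  · exact racSigmaGen_apply_ne I c _ hx

theorem racSigma_fix_unit (hirr : ∀ a, ¬ I a a) (hsym : ∀ a b, I a b → I b a)
    {d : S} : ∀ {v : List S}, (∀ c ∈ v, I d c) →
    racSigma I v (unitVecZ d) = unitVecZ d
  | [], _ => rfl
  | c :: v, h => by
    rw [racSigma_cons, Function.comp_apply,
      racSigma_fix_unit hirr hsym (fun x hx => h x (by simp [hx])),
      racSigmaGen_fix_unit I hirr hsym (h c (by simp))]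

/-- The core induction: for a reduced word `u ++ [d]` in which every position of `u`
has a later dependent position (the "prime" condition on the dependence graph),
`σ_u(e_d)` is positive exactly on the alphabet, and every non-minimal letter `b`
satisfies `λ_b ≤ Σ_{c ∈ N(b)} λ_c`. -/
theorem racSigma_core (hirr : ∀ a, ¬ I a a) (hsym : ∀ a b, I a b → I b a) (d : S) :
    ∀ u : List S,
    CoxT I (mkT I (u ++ [d])) →
    (∀ p a s, u = p ++ a :: s → ∃ c ∈ s ++ [d], ¬ I a c) →
    (∀ b ∈ u ++ [d], 0 < racSigma I u (unitVecZ d) b) ∧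
    (∀ b, b ∉ u ++ [d] → racSigma I u (unitVecZ d) b = 0) ∧
    (∀ b ∈ u ++ [d], (¬ ∃ s, mkT I (u ++ [d]) = mkT I (b :: s)) →
      racSigma I u (unitVecZ d) b ≤
        ∑ c ∈ Finset.univ.filter (fun c : S => c ≠ b ∧ ¬ I b c),
          racSigma I u (unitVecZ d) c) := by
  intro u
  induction u with
  | nil =>
    intro _ _
    refine ⟨?_, ?_, ?_⟩
    · intro b hb
      simp only [List.nil_append, List.mem_singleton] at hb
      subst hb
      simp [racSigma, unitVecZ]
    · intro b hb
      simp only [List.nil_append, List.mem_singleton] at hb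
      simp [racSigma, unitVecZ, hb]
    · intro b hb hnm
      simp only [List.nil_append, List.mem_singleton] at hb
      subst hb
      exact absurd ⟨[], rfl⟩ hnm
  | cons a u' ih =>
    intro hred hP
    have hred' : CoxT I (mkT I (u' ++ [d])) := by
      rintro ⟨c, p, s, hc⟩
      apply hred
      refine ⟨c, a :: p, s, ?_⟩
      have h1 : traceEq I (u' ++ [d]) (p ++ c :: c :: s) := traceEq_of_mkT_eq hc
      have h2 : traceEq I (a :: (u' ++ [d])) (a :: (p ++ c :: c :: s)) :=
        traceEq_cons a h1
      exact mkT_eq_of_traceEq h2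
    have hP' : ∀ p x s, u' = p ++ x :: s → ∃ c ∈ s ++ [d], ¬ I x c := by
      intro p x s h
      exact hP (a :: p) x s (by simp [h])
    obtain ⟨pos', zero', inv'⟩ := ih hred' hP'
    set lam := racSigma I u' (unitVecZ d) with hlam
    have nonneg' : ∀ c, 0 ≤ lam c := by
      intro c
      by_cases hc : c ∈ u' ++ [d]
      · exact (pos' c hc).le
      · simp [zero' c hc]
    set mu := racSigmaGen I a lam with hmu
    have hmueq : racSigma I (a :: u') (unitVecZ d) = mu := rfl
    have mu_ne : ∀ b, b ≠ a → mu b = lam b := fun b hb => racSigmaGen_apply_ne I a lam hb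
    set Sa := ∑ c ∈ Finset.univ.filter (fun c : S => c ≠ a ∧ ¬ I a c), lam c with hSa
    have mu_a : mu a = - lam a + 2 * Sa := racSigmaGen_apply_self I a lam
    have hSa_nonneg : 0 ≤ Sa := Finset.sum_nonneg (fun c _ => nonneg' c)
    have hSa_ge : ∀ b, b ≠ a → ¬ I a b → lam b ≤ Sa := by
      intro b hb1 hb2
      exact Finset.single_le_sum (fun c _ => nonneg' c)
        (Finset.mem_filter.mpr ⟨Finset.mem_univ b, hb1, hb2⟩)
    have hfront : ∃ c ∈ u' ++ [d], ¬ I a c := hP [] a u' rfl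
    -- the first letter bound
    have hkey : (0 < mu a) ∧ (lam a ≤ mu a) ∧
        (∀ b ∈ u' ++ [d], b ≠ a → ¬ I a b → lam b ≤ mu a) := by
      by_cases hmem : a ∈ u' ++ [d]
      · -- Case B
        have hnotmin : ¬ ∃ s, mkT I (u' ++ [d]) = mkT I (a :: s) := by
          rintro ⟨s, hs⟩
          apply hred
          refine ⟨a, [], s, ?_⟩
          have : traceEq I (a :: (u' ++ [d])) (a :: a :: s) :=
            traceEq_cons a (traceEq_of_mkT_eq hs)
          exact mkT_eq_of_traceEq this
        have hinv : lam a ≤ Sa := inv' a hmem hnotmin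
        have hposa : 0 < lam a := pos' a hmem
        refine ⟨by rw [mu_a]; linarith, by rw [mu_a]; linarith, ?_⟩
        intro b hb hb1 hb2
        have := hSa_ge b hb1 hb2
        rw [mu_a]; linarith
      · -- Case A
        have hzeroa : lam a = 0 := zero' a hmem
        obtain ⟨c₀, hc₀mem, hc₀dep⟩ := hfront
        have hc₀ne : c₀ ≠ a := by rintro rfl; exact hmem hc₀mem
        have h1 : lam c₀ ≤ Sa := hSa_ge c₀ hc₀ne hc₀dep
        have h2 : 0 < lam c₀ := pos' c₀ hc₀mem
        refine ⟨by rw [mu_a]; linarith, by rw [mu_a]; linarith, ?_⟩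
        intro b hb hb1 hb2
        have h3 : lam b ≤ Sa := hSa_ge b hb1 hb2
        have h4 : 0 ≤ lam b := nonneg' b
        rw [mu_a]; linarith
    obtain ⟨hmua_pos, hmua_ge, hmua_ge'⟩ := hkey
    have mu_ge : ∀ c, lam c ≤ mu c := by
      intro c
      by_cases hc : c = a
      · subst hc; exact hmua_ge
      · rw [mu_ne c hc]
    have mu_nonneg : ∀ c, 0 ≤ mu c := fun c => le_trans (nonneg' c) (mu_ge c)
    have hcons : (a :: u') ++ [d] = a :: (u' ++ [d]) := rfl
    rw [hmueq]
    refine ⟨?_, ?_, ?_⟩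
    · intro b hb
      rw [hcons, List.mem_cons] at hb
      rcases hb with hb | hb
      · subst hb; exact hmua_pos
      · by_cases hba : b = a
        · subst hba; exact hmua_pos
        · rw [mu_ne b hba]; exact pos' b hb
    · intro b hb
      rw [hcons, List.mem_cons] at hb
      push_neg at hb
      rw [mu_ne b hb.1]
      exact zero' b hb.2
    · intro b hb hnm
      rw [hcons, List.mem_cons] at hb
      by_cases hba : b = a
      · exfalso
        apply hnm
        exact ⟨u' ++ [d], by subst hba; rfl⟩
      · have hbmem : b ∈ u' ++ [d] := by
          rcases hb with hb | hb
          · exact absurd hb hba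
          · exact hb
        rw [mu_ne b hba]
        by_cases hbmin : ∃ s, mkT I (u' ++ [d]) = mkT I (b :: s)
        · -- b is minimal in u'd but not in a u' d, so ¬ I a b
          have hnIab : ¬ I a b := by
            intro hI
            obtain ⟨s, hs⟩ := hbmin
            apply hnm
            refine ⟨a :: s, ?_⟩
            have h1 : traceEq I (a :: (u' ++ [d])) (a :: b :: s) :=
              traceEq_cons a (traceEq_of_mkT_eq hs)
            have h2 : traceEq I (a :: b :: s) (b :: a :: s) :=
              Relation.EqvGen.rel _ _ ⟨[], s, a, b, hI, rfl, rfl⟩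
            exact mkT_eq_of_traceEq (Relation.EqvGen.trans _ _ _ h1 h2)
          have hmem_a : a ∈ Finset.univ.filter (fun c : S => c ≠ b ∧ ¬ I b c) := by
            refine Finset.mem_filter.mpr ⟨Finset.mem_univ a, Ne.symm hba, ?_⟩
            exact fun h => hnIab (hsym b a h)
          calc lam b ≤ mu a := hmua_ge' b hbmem (hba) hnIab
            _ ≤ _ := Finset.single_le_sum (fun c _ => mu_nonneg c) hmem_a
        · calc lam b ≤ ∑ c ∈ Finset.univ.filter (fun c : S => c ≠ b ∧ ¬ I b c), lam c :=
              inv' b hbmem hbmin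
            _ ≤ _ := Finset.sum_le_sum (fun c _ => mu_ge c)

end Sigma

/-- Let `w·d` be a Coxeter trace with `w·d = u·d·v`, where `u·d` is prime and every
letter of `v` is independent of `d`. Writing `σ_w(d) = Σ_b λ_b b` in the geometric
representation of the right-angled Coxeter group `C(Σ, I)`, we have `λ_b ≠ 0` iff
`b ∈ α(u·d)`, and moreover `λ_b > 0` for all `b ∈ α(u·d)`. -/
theorem racSigma_support_of_prime {S : Type*} [Fintype S] [DecidableEq S]
    (I : S → S → Prop) [∀ a b : S, Decidable (I a b)]
    (hirr : ∀ a, ¬ I a a) (hsym : ∀ a b, I a b → I b a)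
    (w u v : List S) (d : S)
    (hcox : CoxT I (mkT I (w ++ [d])))
    (hfac : mkT I (w ++ [d]) = mkT I (u ++ d :: v))
    (hprime : PrimeT I (mkT I (u ++ [d])))
    (hind : ∀ b ∈ v, I d b) :
    ∀ b : S,
      (racSigma I w (unitVecZ d) b ≠ 0 ↔ b ∈ u ++ [d]) ∧
      (b ∈ u ++ [d] → 0 < racSigma I w (unitVecZ d) b) := by
  -- step 1: σ_w(e_d) = σ_u(e_d)
  have h1 : traceEq I (w ++ [d]) (u ++ d :: v) := traceEq_of_mkT_eq hfac
  have h2 : traceEq I (d :: v) (v ++ [d]) := traceEq_shift hind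
  have h3 : traceEq I (u ++ d :: v) (u ++ (v ++ [d])) := traceEq_append_left u h2
  have h4 : traceEq I (w ++ [d]) ((u ++ v) ++ [d]) := by
    rw [List.append_assoc]
    exact Relation.EqvGen.trans _ _ _ h1 h3
  have hσ : racSigma I (w ++ [d]) = racSigma I ((u ++ v) ++ [d]) :=
    racSigma_traceEq I hsym h4
  have hw_eq : racSigma I w (unitVecZ d) = racSigma I u (unitVecZ d) := by
    have inv : ∀ x : List S, racSigma I x (unitVecZ d)
        = racSigma I (x ++ [d]) (racSigmaGen I d (unitVecZ d)) := by
      intro x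
      have hinvol : racSigma I [d] (racSigmaGen I d (unitVecZ d)) = unitVecZ d := by
        show racSigmaGen I d (id (racSigmaGen I d (unitVecZ d))) = unitVecZ d
        exact racSigmaGen_invol I d (unitVecZ d)
      rw [racSigma_append, Function.comp_apply, hinvol]
    calc racSigma I w (unitVecZ d)
        = racSigma I (w ++ [d]) (racSigmaGen I d (unitVecZ d)) := inv w
      _ = racSigma I ((u ++ v) ++ [d]) (racSigmaGen I d (unitVecZ d)) := by rw [hσ]
      _ = racSigma I (u ++ v) (unitVecZ d) := (inv (u ++ v)).symm
      _ = racSigma I u (racSigma I v (unitVecZ d)) := by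
          rw [racSigma_append, Function.comp_apply]
      _ = racSigma I u (unitVecZ d) := by rw [racSigma_fix_unit I hirr hsym hind]
  -- step 2: u ++ [d] is a Coxeter trace
  have hfac' : traceEq I (w ++ [d]) ((u ++ [d]) ++ v) := by
    have : u ++ d :: v = (u ++ [d]) ++ v := by simp
    rw [← this]; exact h1
  have hcox' : CoxT I (mkT I (u ++ [d])) := by
    rintro ⟨c, p, s, hcs⟩
    apply hcox
    refine ⟨c, p, s ++ v, ?_⟩
    have hc1 : traceEq I ((u ++ [d]) ++ v) ((p ++ c :: c :: s) ++ v) :=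
      traceEq_append_right v (traceEq_of_mkT_eq hcs)
    have hc2 : traceEq I (w ++ [d]) ((p ++ c :: c :: s) ++ v) :=
      Relation.EqvGen.trans _ _ _ hfac' hc1
    have : (p ++ c :: c :: s) ++ v = p ++ c :: c :: (s ++ v) := by simp
    rw [this] at hc2
    exact mkT_eq_of_traceEq hc2
  -- step 3: the prime condition gives "every position of u has a later dependent one"
  have hPud : ∀ p a s, u = p ++ a :: s → ∃ c ∈ s ++ [d], ¬ I a c := by
    intro p a s hsplit
    by_contra hno
    push_neg at hno
    have hshift : traceEq I (a :: (s ++ [d])) ((s ++ [d]) ++ [a]) :=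
      traceEq_shift hno
    have hsplit2 : u ++ [d] = p ++ a :: (s ++ [d]) := by simp [hsplit]
    have htr : mkT I (u ++ [d]) = mkT I ((p ++ (s ++ [d])) ++ [a]) := by
      rw [hsplit2, List.append_assoc]
      exact mkT_eq_of_traceEq (traceEq_append_left p hshift)
    obtain ⟨a₀, v₀, _, huniq⟩ := hprime
    have e1 : a₀ = d := (huniq d u rfl).1
    have e2 : a₀ = a := (huniq a (p ++ (s ++ [d])) htr).1
    have had : a = d := e2.symm.trans e1
    have : I a d := hno d (by simp)
    rw [had] at this
    exact hirr d this
  obtain ⟨pos, zero, _⟩ := racSigma_core I hirr hsym d u hcox' hPud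
  intro b
  rw [hw_eq]
  refine ⟨⟨?_, ?_⟩, fun hb => pos b hb⟩
  · intro hne
    by_contra hb
    exact hne (zero b hb)
  · intro hb
    exact (pos b hb).ne'
end

section
/- For every n ≥ 7, the least common multiple of the integers 1,2,…,n is greater than 2ⁿ. -/
open Finset Nat

lemma lcm_Icc_ne_zero (n : ℕ) : (Finset.Icc 1 n).lcm id ≠ 0 := by
  rw [Ne, Finset.lcm_eq_zero_iff]
  rintro ⟨x, hx, rfl⟩
  simp only [Finset.coe_Icc, Set.mem_Icc, Finset.mem_Icc] at hx
  omega

lemma log_le_factorization_lcm {p : ℕ} (hp : p.Prime) {n : ℕ} (hn : n ≠ 0) :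
    Nat.log p n ≤ ((Finset.Icc 1 n).lcm id).factorization p := by
  rw [← Nat.Prime.pow_dvd_iff_le_factorization hp (lcm_Icc_ne_zero n)]
  have h1 : 1 ≤ p ^ Nat.log p n := Nat.one_le_pow _ _ hp.pos
  have h2 : p ^ Nat.log p n ≤ n := Nat.pow_log_le_self p hn
  exact Finset.dvd_lcm (Finset.mem_Icc.mpr ⟨h1, h2⟩)

lemma factorization_mul_choose_le {p n k : ℕ} (hp : p.Prime) (hk : k ≠ 0) (hkn : k ≤ n) :
    k.factorization p + (n.choose k).factorization p ≤ Nat.log p n := by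
  have hn : n ≠ 0 := by omega
  set a := k.factorization p with ha
  have hpa : p ^ a ∣ k := Nat.ordProj_dvd k p
  have hpan : p ^ a ≤ n :=
    le_trans (Nat.le_of_dvd (Nat.pos_of_ne_zero hk) hpa) hkn
  have halog : a ≤ Nat.log p n := (Nat.le_log_iff_pow_le hp.one_lt hn).mpr hpan
  have hcard : (n.choose k).factorization p ≤ Nat.log p n - a := by
    rw [Nat.factorization_def _ hp, @padicValNat_def _ ⟨hp⟩ _ (Nat.choose_pos hkn).ne',
      ← Nat.cast_le (α := ℕ∞), ← FiniteMultiplicity.emultiplicity_eq_multiplicity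
        (Nat.finiteMultiplicity_iff.2 ⟨hp.ne_one, Nat.choose_pos hkn⟩),
      hp.emultiplicity_choose hkn (Nat.lt_succ_self (Nat.log p n)), Nat.cast_le]
    have hsub : ({i ∈ Finset.Ico 1 (Nat.log p n + 1) |
        p ^ i ≤ k % p ^ i + (n - k) % p ^ i}) ⊆ Finset.Ico (a + 1) (Nat.log p n + 1) := by
      intro i hi
      simp only [Finset.mem_filter, Finset.mem_Ico] at hi ⊢
      obtain ⟨⟨hi1, hi2⟩, hcond⟩ := hi
      refine ⟨?_, hi2⟩
      by_contra h
      push_neg at h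
      have hdvd : p ^ i ∣ k := dvd_trans (pow_dvd_pow p (by omega)) hpa
      have hmod : k % p ^ i = 0 := Nat.eq_zero_of_dvd_of_lt
        ((Nat.dvd_mod_iff dvd_rfl).mpr hdvd) (Nat.mod_lt _ (Nat.pow_pos (n := i) hp.pos))
      have hmod2 : (n - k) % p ^ i < p ^ i := Nat.mod_lt _ (Nat.pow_pos (n := i) hp.pos)
      omega
    calc _ ≤ (Finset.Ico (a + 1) (Nat.log p n + 1)).card := Finset.card_le_card hsub
      _ = Nat.log p n - a := by rw [Nat.card_Ico]; omega
  omega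

lemma mul_choose_dvd_lcm {n k : ℕ} (hk : 1 ≤ k) (hkn : k ≤ n) :
    k * n.choose k ∣ (Finset.Icc 1 n).lcm id := by
  have hn : n ≠ 0 := by omega
  have hne : k * n.choose k ≠ 0 :=
    Nat.mul_ne_zero (by omega) (Nat.choose_pos hkn).ne'
  rw [← Nat.factorization_le_iff_dvd hne (lcm_Icc_ne_zero n), Finsupp.le_def]
  intro p
  by_cases hp : p.Prime
  · rw [Nat.factorization_mul (by omega) (Nat.choose_pos hkn).ne']
    simp only [Finsupp.coe_add, Pi.add_apply]
    exact le_trans (factorization_mul_choose_le hp (by omega) hkn)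
      (log_le_factorization_lcm hp hn)
  · simp [Nat.factorization_eq_zero_of_not_prime _ hp]

lemma nair_dvd (m : ℕ) (hm : 1 ≤ m) :
    m * ((2 * m + 1) * (2 * m).choose m) ∣ (Finset.Icc 1 (2 * m + 1)).lcm id := by
  set C := (2 * m).choose m with hC
  set L := (Finset.Icc 1 (2 * m + 1)).lcm id with hL
  have h1 : m * C ∣ L := by
    refine dvd_trans (mul_choose_dvd_lcm hm (by omega)) ?_
    exact Finset.lcm_mono (Finset.Icc_subset_Icc le_rfl (by omega))
  have h2 : (2 * m + 1) * C ∣ L := by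
    have hid : (2 * m + 1) * C = (m + 1) * (2 * m + 1).choose (m + 1) := by
      have := Nat.add_one_mul_choose_eq (2 * m) m
      rw [hC, this]; ring
    rw [hid]
    exact mul_choose_dvd_lcm (by omega) (by omega)
  have hco : Nat.Coprime m (2 * m + 1) := by
    have := (Nat.coprime_add_mul_right_right m 1 2).mpr (Nat.coprime_one_right m)
    rwa [show 1 + 2 * m = 2 * m + 1 by ring] at this
  have hlcm : Nat.lcm (m * C) ((2 * m + 1) * C) ∣ L := Nat.lcm_dvd h1 h2
  rwa [Nat.lcm_mul_right, hco.lcm_eq_mul, mul_assoc] at hlcm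

/-- For every `n ≥ 7`, the least common multiple of `1, 2, …, n` is greater than `2 ^ n`. -/
theorem two_pow_lt_lcm_Icc (n : ℕ) (hn : 7 ≤ n) :
    2 ^ n < (Finset.Icc 1 n).lcm id := by
  obtain ⟨m, hm3, hr1, hr2⟩ : ∃ m, 3 ≤ m ∧ 2 * m + 1 ≤ n ∧ n ≤ 2 * m + 2 :=
    ⟨(n - 1) / 2, by omega, by omega, by omega⟩
  have hdvd : m * ((2 * m + 1) * (2 * m).choose m) ∣ (Finset.Icc 1 n).lcm id :=
    dvd_trans (nair_dvd m (by omega))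
      (Finset.lcm_mono (Finset.Icc_subset_Icc le_rfl (by omega)))
  have hle := Nat.le_of_dvd (Nat.pos_of_ne_zero (lcm_Icc_ne_zero n)) hdvd
  have hkey : 2 ^ n < m * ((2 * m + 1) * (2 * m).choose m) := by
    rcases le_or_gt 4 m with h4 | h4
    · have hcb : 4 ^ m < m * (2 * m).choose m := by
        have := Nat.four_pow_lt_mul_centralBinom m h4
        rwa [Nat.centralBinom] at this
      calc 2 ^ n ≤ 2 ^ (2 * m + 2) := Nat.pow_le_pow_right (by norm_num) (by omega)
        _ = 4 * 4 ^ m := by rw [pow_succ, pow_succ, pow_mul]; ring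
        _ < 4 * (m * (2 * m).choose m) := Nat.mul_lt_mul_of_pos_left hcb (by norm_num)
        _ ≤ (2 * m + 1) * (m * (2 * m).choose m) := Nat.mul_le_mul_right _ (by omega)
        _ = m * ((2 * m + 1) * (2 * m).choose m) := by ring
    · have hm4 : m = 3 := by omega
      subst hm4
      have hc : (2 * 3).choose 3 = 20 := by decide
      rw [hc]
      calc 2 ^ n ≤ 2 ^ 8 := Nat.pow_le_pow_right (by norm_num) (by omega)
        _ < 3 * ((2 * 3 + 1) * 20) := by norm_num
  exact lt_of_lt_of_le hkey hle
end
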